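/- arXiv:2009.12574 — 5 statements merged into one kernel-verified Lean document; each statement's English description precedes it below -/
import Mathlib

section
/- Every entropy-like (EL) function f : O^n → ℝ is concave along any positive direction: if 0 ≤ x ≤ y (coordinatewise) and 0 ≤ λ ≤ 1, then λ·f(x) + (1−λ)·f(y) ≤ f(λ·x + (1−λ)·y). -/
open Filter Topology Set

/-- Entropy-like (EL) function on the non-negative orthant of ℝ^n:
pointed, submodular (coordinatewise lattice), non-decreasing,
and satisfying the Diminishing Returns property along each coordinate. -/
def IsEL (n : ℕ) (f : (Fin n → ℝ) → ℝ) : Prop :=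
  f 0 = 0 ∧
  (∀ x y : Fin n → ℝ, 0 ≤ x → 0 ≤ y → f (x ⊓ y) + f (x ⊔ y) ≤ f x + f y) ∧
  (∀ x y : Fin n → ℝ, 0 ≤ x → x ≤ y → f x ≤ f y) ∧
  (∀ (x : Fin n → ℝ) (i : Fin n) (lam eps : ℝ), 0 ≤ x → 0 < lam → 0 < eps →
    f ((x + lam • (Pi.single i 1 : Fin n → ℝ)) + eps • (Pi.single i 1 : Fin n → ℝ)) - f (x + lam • (Pi.single i 1 : Fin n → ℝ)) ≤
      f (x + eps • (Pi.single i 1 : Fin n → ℝ)) - f x)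

/-- The right partial derivative of `f` in coordinate `i` at `x` is `d`. -/
def HasRightPD (n : ℕ) (f : (Fin n → ℝ) → ℝ) (i : Fin n) (x : Fin n → ℝ) (d : ℝ) : Prop :=
  Filter.Tendsto (fun ε : ℝ => (f (x + ε • (Pi.single i 1 : Fin n → ℝ)) - f x) / ε) (𝓝[>] 0) (𝓝 d)

/-- The left partial derivative of `f` in coordinate `i` at `x` is `d`. -/
def HasLeftPD (n : ℕ) (f : (Fin n → ℝ) → ℝ) (i : Fin n) (x : Fin n → ℝ) (d : ℝ) : Prop :=
  Filter.Tendsto (fun ε : ℝ => (f x - f (x - ε • (Pi.single i 1 : Fin n → ℝ))) / ε) (𝓝[>] 0) (𝓝 d)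

lemma single_smul_nonneg {n : ℕ} (i : Fin n) {t : ℝ} (ht : 0 ≤ t) :
    0 ≤ t • (Pi.single i 1 : Fin n → ℝ) :=
  smul_nonneg ht (Pi.single_nonneg.2 zero_le_one)

lemma weakDR {n : ℕ} {f : (Fin n → ℝ) → ℝ} (hf : IsEL n f)
    {z z' : Fin n → ℝ} (hz : 0 ≤ z) (hzz : z ≤ z') (i : Fin n) {ε : ℝ} (hε : 0 < ε) :
    f (z' + ε • (Pi.single i 1 : Fin n → ℝ)) - f z' ≤
      f (z + ε • (Pi.single i 1 : Fin n → ℝ)) - f z := by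
  obtain ⟨-, hsub, hmono, hDR⟩ := hf
  set e : Fin n → ℝ := (Pi.single i 1 : Fin n → ℝ) with he
  have hz' : 0 ≤ z' := le_trans hz hzz
  have hεe : 0 ≤ ε • e := single_smul_nonneg i hε.le
  rcases eq_or_lt_of_le (hzz i) with hc | hc
  · -- z i = z' i : submodularity with a = z + ε • e, b = z'
    have hinf : (z + ε • e) ⊓ z' = z := by
      funext j
      simp only [Pi.inf_apply, Pi.add_apply, Pi.smul_apply, smul_eq_mul, he, Pi.single_apply]
      rcases eq_or_ne j i with rfl | hj
      · simp only [if_pos rfl, mul_one]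
        rw [← hc]
        exact min_eq_right (by simp; linarith)
      · simp only [if_neg hj, mul_zero, add_zero]
        exact min_eq_left (hzz j)
    have hsup : (z + ε • e) ⊔ z' = z' + ε • e := by
      funext j
      simp only [Pi.sup_apply, Pi.add_apply, Pi.smul_apply, smul_eq_mul, he, Pi.single_apply]
      rcases eq_or_ne j i with rfl | hj
      · simp only [if_pos rfl, mul_one]
        rw [← hc]
        exact max_eq_left (by simp; linarith)
      · simp only [if_neg hj, mul_zero, add_zero]
        exact max_eq_right (hzz j)
    have := hsub (z + ε • e) z' (le_add_of_le_of_nonneg hz hεe) hz'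
    rw [hinf, hsup] at this
    linarith
  · -- z i < z' i
    set c : ℝ := z' i - z i with hcdef
    have hcpos : 0 < c := sub_pos.2 hc
    have hdr := hDR z i c ε hz hcpos hε
    set z'' : Fin n → ℝ := z + c • e with hz''
    have hz''i : z'' i = z' i := by
      simp [hz'', he, Pi.single_apply, hcdef]
    have hz''j : ∀ j, j ≠ i → z'' j = z j := by
      intro j hj
      simp [hz'', he, Pi.single_apply, hj]
    have hz''nn : 0 ≤ z'' := le_add_of_le_of_nonneg hz (single_smul_nonneg i hcpos.le)
    have hinf : (z'' + ε • e) ⊓ z' = z'' := by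
      funext j
      simp only [Pi.inf_apply, Pi.add_apply]
      rcases eq_or_ne j i with rfl | hj
      · have : (ε • e) j = ε := by simp [he, Pi.single_apply]
        rw [this, hz''i]
        exact min_eq_right (by simp; linarith)
      · have : (ε • e) j = 0 := by simp [he, Pi.single_apply, hj]
        rw [this, add_zero, hz''j j hj]
        exact min_eq_left (hzz j)
    have hsup : (z'' + ε • e) ⊔ z' = z' + ε • e := by
      funext j
      simp only [Pi.sup_apply, Pi.add_apply]
      rcases eq_or_ne j i with rfl | hj
      · have h1 : (ε • e) j = ε := by simp [he, Pi.single_apply]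
        rw [h1, hz''i]
        exact max_eq_left (by simp; linarith)
      · have h1 : (ε • e) j = 0 := by simp [he, Pi.single_apply, hj]
        rw [h1, add_zero, add_zero, hz''j j hj]
        exact max_eq_right (hzz j)
    have := hsub (z'' + ε • e) z' (le_add_of_le_of_nonneg hz''nn hεe) hz'
    rw [hinf, hsup] at this
    linarith

lemma dirStep_aux {n : ℕ} {f : (Fin n → ℝ) → ℝ} (hf : IsEL n f)
    {z z' : Fin n → ℝ} (hz : 0 ≤ z) (hzz : z ≤ z') {v : Fin n → ℝ} (hv : 0 ≤ v)
    (s : Finset (Fin n)) :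
    f (z' + ∑ i ∈ s, v i • (Pi.single i 1 : Fin n → ℝ)) - f z' ≤
      f (z + ∑ i ∈ s, v i • (Pi.single i 1 : Fin n → ℝ)) - f z := by
  classical
  induction s using Finset.induction_on with
  | empty => simp
  | @insert i s his ih =>
    rw [Finset.sum_insert his]
    set S : Fin n → ℝ := ∑ j ∈ s, v j • (Pi.single j 1 : Fin n → ℝ) with hS
    have hSnn : 0 ≤ S := Finset.sum_nonneg fun j _ => single_smul_nonneg j (hv j)
    have e1 : z' + (v i • (Pi.single i 1 : Fin n → ℝ) + S)
        = (z' + S) + v i • (Pi.single i 1 : Fin n → ℝ) := by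
      rw [add_comm (v i • _) S, ← add_assoc]
    have e2 : z + (v i • (Pi.single i 1 : Fin n → ℝ) + S)
        = (z + S) + v i • (Pi.single i 1 : Fin n → ℝ) := by
      rw [add_comm (v i • _) S, ← add_assoc]
    rw [e1, e2]
    rcases eq_or_lt_of_le (hv i) with hvi | hvi
    · rw [← hvi]
      simpa using ih
    · have hstep := weakDR hf (le_add_of_le_of_nonneg hz hSnn)
        (add_le_add_left hzz S) i hvi
      linarith [ih]

lemma dirStep {n : ℕ} {f : (Fin n → ℝ) → ℝ} (hf : IsEL n f)
    {z z' : Fin n → ℝ} (hz : 0 ≤ z) (hzz : z ≤ z') {v : Fin n → ℝ} (hv : 0 ≤ v) :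
    f (z' + v) - f z' ≤ f (z + v) - f z := by
  have hrepr : ∑ i : Fin n, v i • (Pi.single i 1 : Fin n → ℝ) = v := by
    funext j
    simp [Finset.sum_apply, Pi.single_apply, mul_ite]
  have := dirStep_aux hf hz hzz hv Finset.univ
  rwa [hrepr] at this

lemma sum_head_avg {Δ : ℕ → ℝ} (hΔ : ∀ k l : ℕ, k ≤ l → Δ l ≤ Δ k) {p q : ℕ} (hpq : p ≤ q) :
    (p : ℝ) * ∑ k ∈ Finset.range q, Δ k ≤ (q : ℝ) * ∑ k ∈ Finset.range p, Δ k := by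
  have hsplit : ∑ k ∈ Finset.range p, Δ k + ∑ k ∈ Finset.Ico p q, Δ k
      = ∑ k ∈ Finset.range q, Δ k := by
    simp only [Finset.range_eq_Ico]
    exact Finset.sum_Ico_consecutive _ (Nat.zero_le p) hpq
  have h1 : (p : ℝ) * Δ p ≤ ∑ k ∈ Finset.range p, Δ k := by
    have := Finset.card_nsmul_le_sum (Finset.range p) Δ (Δ p)
      (fun k hk => hΔ k p (le_of_lt (Finset.mem_range.mp hk)))
    simpa [nsmul_eq_mul] using this
  have h2 : ∑ k ∈ Finset.Ico p q, Δ k ≤ ((q - p : ℕ) : ℝ) * Δ p := by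
    have := Finset.sum_le_card_nsmul (Finset.Ico p q) Δ (Δ p)
      (fun k hk => hΔ p k (Finset.mem_Ico.mp hk).1)
    simpa [nsmul_eq_mul, Nat.card_Ico] using this
  have hc : ((q - p : ℕ) : ℝ) = (q : ℝ) - p := by
    rw [Nat.cast_sub hpq]
  rw [hc] at h2
  set A := ∑ k ∈ Finset.range p, Δ k
  set B := ∑ k ∈ Finset.Ico p q, Δ k
  have hp0 : (0:ℝ) ≤ p := Nat.cast_nonneg p
  have hqp : (0:ℝ) ≤ (q:ℝ) - p := by
    have : (p:ℝ) ≤ (q:ℝ) := by exact_mod_cast hpq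
    linarith
  nlinarith [mul_le_mul_of_nonneg_left h2 hp0, mul_le_mul_of_nonneg_left h1 hqp]

lemma rat_concave (G : ℝ → ℝ)
    (H : ∀ s t δ : ℝ, 0 ≤ s → s ≤ t → 0 ≤ δ → G (t + δ) - G t ≤ G (s + δ) - G s)
    (p q : ℕ) (hq : 0 < q) (hpq : p ≤ q) :
    (1 - (p:ℝ)/q) * G 0 + ((p:ℝ)/q) * G 1 ≤ G ((p:ℝ)/q) := by
  have hq' : (0:ℝ) < q := Nat.cast_pos.mpr hq
  set Δ : ℕ → ℝ := fun k => G (((k:ℝ)+1)/q) - G ((k:ℝ)/q) with hΔdef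
  have hΔanti : ∀ k l : ℕ, k ≤ l → Δ l ≤ Δ k := by
    intro k l hkl
    have hkl' : (k:ℝ)/q ≤ (l:ℝ)/q := by
      have hkl2 : (k:ℝ) ≤ (l:ℝ) := by exact_mod_cast hkl
      gcongr
    have hk0 : (0:ℝ) ≤ (k:ℝ)/q := by positivity
    have h1q : (0:ℝ) ≤ 1/q := by positivity
    have := H ((k:ℝ)/q) ((l:ℝ)/q) (1/q) hk0 hkl' h1q
    rw [← add_div, ← add_div] at this
    exact this
  have htel : ∀ m : ℕ, ∑ k ∈ Finset.range m, Δ k = G ((m:ℝ)/q) - G 0 := by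
    intro m
    induction m with
    | zero => simp
    | succ m ih =>
      rw [Finset.sum_range_succ, ih]
      have hcast : ((m+1:ℕ):ℝ) = (m:ℝ) + 1 := by push_cast; ring
      rw [hcast, hΔdef]
      ring
  have key0 := sum_head_avg hΔanti hpq
  rw [htel p, htel q] at key0
  have hqq : (q:ℝ)/q = 1 := div_self (ne_of_gt hq')
  rw [hqq] at key0
  -- key0 : p * (G 1 - G 0) ≤ q * (G (p/q) - G 0)
  set r : ℝ := (p:ℝ)/q with hr
  have hrq : r * q = p := by rw [hr]; exact div_mul_cancel₀ _ (ne_of_gt hq')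
  have heq : (q:ℝ) * (r * (G 1 - G 0)) = (p:ℝ) * (G 1 - G 0) := by
    rw [← hrq]; ring
  have hmul : (q:ℝ) * (r * (G 1 - G 0)) ≤ (q:ℝ) * (G r - G 0) := by
    rw [heq]; exact key0
  have := le_of_mul_le_mul_left hmul hq'
  linarith


/-- every EL function is concave along any positive direction. -/
theorem stmt_1 {n : ℕ} (f : (Fin n → ℝ) → ℝ) (hf : IsEL n f)
    (x y : Fin n → ℝ) (hx : 0 ≤ x) (hxy : x ≤ y)
    (lam : ℝ) (h0 : 0 ≤ lam) (h1 : lam ≤ 1) :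
    lam * f x + (1 - lam) * f y ≤ f (lam • x + (1 - lam) • y) := by
  set v : Fin n → ℝ := y - x with hv
  have hvnn : 0 ≤ v := by
    rw [hv]
    exact sub_nonneg.2 hxy
  set G : ℝ → ℝ := fun t => f (x + t • v) with hG
  have hxt : ∀ t : ℝ, 0 ≤ t → 0 ≤ x + t • v :=
    fun t ht => add_nonneg hx (smul_nonneg ht hvnn)
  have hsm : ∀ s t : ℝ, s ≤ t → s • v ≤ t • v := by
    intro s t hst j
    simp only [Pi.smul_apply, smul_eq_mul]
    exact mul_le_mul_of_nonneg_right hst (hvnn j)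
  have hGmono : ∀ s t : ℝ, 0 ≤ s → s ≤ t → G s ≤ G t := by
    intro s t hs hst
    exact hf.2.2.1 _ _ (hxt s hs) (add_le_add_right (hsm s t hst) x)
  have H : ∀ s t δ : ℝ, 0 ≤ s → s ≤ t → 0 ≤ δ → G (t + δ) - G t ≤ G (s + δ) - G s := by
    intro s t δ hs hst hδ
    have := dirStep hf (hxt s hs) (add_le_add_right (hsm s t hst) x)
      (smul_nonneg hδ hvnn)
    simp only [hG]
    rw [add_smul, add_smul, ← add_assoc, ← add_assoc]
    exact this
  have hG0 : G 0 = f x := by simp [hG]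
  have hG1 : G 1 = f y := by simp [hG, hv]
  have main : ∀ μ : ℝ, 0 ≤ μ → μ ≤ 1 → (1 - μ) * G 0 + μ * G 1 ≤ G μ := by
    intro μ hμ0 hμ1
    rcases eq_or_lt_of_le hμ0 with hμz | hμpos
    · rw [← hμz]; simp
    · apply le_of_forall_pos_le_add
      intro ε hε
      set D : ℝ := G 1 - G 0 with hD
      have hDnn : 0 ≤ D := sub_nonneg.2 (hGmono 0 1 le_rfl zero_le_one)
      have hδpos : 0 < ε / (D + 1) := by positivity
      obtain ⟨r, hr1, hr2⟩ := exists_rat_btwn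
        (show max (μ - ε / (D + 1)) 0 < μ from max_lt (by linarith) hμpos)
      have hr0 : (0:ℝ) < (r:ℝ) := lt_of_le_of_lt (le_max_right _ _) hr1
      have hrle1 : (r:ℝ) ≤ 1 := le_trans hr2.le hμ1
      have hnum : (0:ℤ) ≤ r.num := Rat.num_nonneg.mpr (by exact_mod_cast hr0.le)
      have hden : (0:ℝ) < (r.den : ℝ) := by exact_mod_cast r.pos
      have hrcast : (r:ℝ) = ((r.num.toNat : ℕ) : ℝ) / ((r.den : ℕ) : ℝ) := by
        rw [Rat.cast_def]
        congr 1
        exact_mod_cast (Int.toNat_of_nonneg hnum).symm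
      have hpq : r.num.toNat ≤ r.den := by
        have h5 : ((r.num.toNat : ℕ) : ℝ) ≤ ((r.den : ℕ) : ℝ) := by
          calc ((r.num.toNat : ℕ) : ℝ)
              = ((r.num.toNat : ℕ) : ℝ) / (r.den : ℝ) * (r.den : ℝ) := by field_simp
            _ ≤ 1 * (r.den : ℝ) := by
                apply mul_le_mul_of_nonneg_right _ hden.le
                rw [← hrcast]; exact hrle1
            _ = (r.den : ℝ) := one_mul _
        exact_mod_cast h5
      have key := rat_concave G H r.num.toNat r.den r.pos hpq
      rw [← hrcast] at key
      have hGr : G (r:ℝ) ≤ G μ := hGmono _ _ hr0.le hr2.le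
      have hmr : μ - (r:ℝ) ≤ ε / (D + 1) := by
        have := lt_of_le_of_lt (le_max_left _ _) hr1
        linarith
      have h3 : (μ - (r:ℝ)) * D ≤ (ε / (D + 1)) * D :=
        mul_le_mul_of_nonneg_right hmr hDnn
      have h4 : (ε / (D + 1)) * D ≤ ε := by
        rw [div_mul_eq_mul_div, div_le_iff₀ (by positivity : (0:ℝ) < D + 1)]
        nlinarith
      have expand : (1 - μ) * G 0 + μ * G 1
          = (1 - (r:ℝ)) * G 0 + (r:ℝ) * G 1 + (μ - (r:ℝ)) * D := by
        rw [hD]; ring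
      linarith
  have harg : lam • x + (1 - lam) • y = x + (1 - lam) • v := by
    rw [hv]
    funext j
    simp only [Pi.add_apply, Pi.smul_apply, Pi.sub_apply, smul_eq_mul]
    ring
  rw [harg]
  have hm := main (1 - lam) (by linarith) (by linarith)
  rw [hG0, hG1] at hm
  simpa [hG] using hm
end

section
/- For any EL function f : O^n → ℝ, the Diminishing Returns inequality holds for arbitrary pairs of points: if 0 ≤ x ≤ y (coordinatewise) and ε > 0, then for every coordinate i, f(x + ε·e_i) − f(x) ≥ f(y + ε·e_i) − f(y). -/
open Filter Topology Set

/-- the Diminishing Returns inequality holds for arbitrary pairs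
of comparable points. -/
theorem stmt_2 {n : ℕ} (f : (Fin n → ℝ) → ℝ) (hf : IsEL n f)
    (x y : Fin n → ℝ) (hx : 0 ≤ x) (hxy : x ≤ y) (i : Fin n)
    (eps : ℝ) (heps : 0 < eps) :
    f (y + eps • (Pi.single i 1 : Fin n → ℝ)) - f y ≤
      f (x + eps • (Pi.single i 1 : Fin n → ℝ)) - f x := by
  obtain ⟨h0, hsub, hmono, hDR⟩ := hf
  set e : Fin n → ℝ := Pi.single i 1 with he
  set z : Fin n → ℝ := Function.update y i (x i) with hz
  have hz0 : 0 ≤ z := by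
    intro j
    by_cases h : j = i
    · subst h; simp [hz]; exact hx j
    · simp [hz, Function.update_of_ne h]; exact le_trans (hx j) (hxy j)
  have hinf : (x + eps • e) ⊓ z = x := by
    funext j
    simp only [Pi.inf_apply, Pi.add_apply, Pi.smul_apply, he, Pi.single_apply, smul_eq_mul, hz]
    by_cases h : j = i
    · subst h; rw [Function.update_self, if_pos rfl, mul_one]
      exact inf_eq_right.2 (by linarith)
    · rw [Function.update_of_ne h, if_neg h, mul_zero, add_zero]
      exact inf_eq_left.2 (hxy j)
  have hsup : (x + eps • e) ⊔ z = z + eps • e := by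
    funext j
    simp only [Pi.sup_apply, Pi.add_apply, Pi.smul_apply, he, Pi.single_apply, smul_eq_mul, hz]
    by_cases h : j = i
    · subst h; rw [Function.update_self, if_pos rfl, mul_one]
      exact sup_eq_left.2 (by linarith)
    · rw [Function.update_of_ne h, if_neg h, mul_zero, add_zero, add_zero]
      exact sup_eq_right.2 (hxy j)
  have hxe0 : 0 ≤ x + eps • e := by
    intro j
    have h1 : (0:ℝ) ≤ x j := hx j
    have h2 : (0:ℝ) ≤ eps * (if j = i then 1 else 0) := by
      by_cases h : j = i <;> simp [h, heps.le]
    simp only [Pi.add_apply, Pi.smul_apply, he, Pi.single_apply, smul_eq_mul, Pi.zero_apply]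
    linarith
  have hstep1 : f x + f (z + eps • e) ≤ f (x + eps • e) + f z := by
    have := hsub (x + eps • e) z hxe0 hz0
    rw [hinf, hsup] at this
    linarith
  have hstep2 : f (y + eps • e) - f y ≤ f (z + eps • e) - f z := by
    rcases eq_or_lt_of_le (hxy i) with h | h
    · have : z = y := by rw [hz, h]; exact Function.update_eq_self i y
      rw [this]
    · have hzy : z + (y i - x i) • e = y := by
        funext j
        by_cases hj : j = i
        · subst hj; simp [hz, he, Pi.single_apply]
        · simp [hz, he, Function.update_of_ne hj, Pi.single_apply, hj]
      have := hDR z i (y i - x i) eps hz0 (by linarith) heps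
      rw [hzy] at this
      exact this
  linarith
end

section
/- Let S be the intersection of the hyperplane {x : c₁x₁ + ⋯ + c_nx_n = M} with the non-negative orthant, where all cᵢ > 0 and M > 0. Then the function f(y) = k·min(Σᵢ cᵢyᵢ, M) with k = 1/min_i cᵢ is an EL function that is S-feasible, and its cost equals (max_i cᵢ)/(min_i cᵢ). -/
open Filter Topology Set

lemma min_subadd (a b s t M : ℝ) (h1 : a ≤ s) (h3 : s ≤ b) (h4 : t ≤ b)
    (h5 : a + b = s + t) : min a M + min b M ≤ min s M + min t M := by
  simp only [min_def]; split_ifs <;> linarith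

lemma min_dr (u v d M : ℝ) (hvu : v ≤ u) (hd : 0 ≤ d) :
    min (u + d) M - min u M ≤ min (v + d) M - min v M := by
  simp only [min_def]; split_ifs <;> linarith

lemma sum_add_single {n : ℕ} (c x : Fin n → ℝ) (i : Fin n) (t : ℝ) :
    ∑ j, c j * (x + t • (Pi.single i 1 : Fin n → ℝ)) j = (∑ j, c j * x j) + t * c i := by
  simp [Pi.single_apply, mul_add, Finset.sum_add_distrib, mul_ite, mul_comm]

/-- for a linear s-surface `∑ cᵢxᵢ = M`, the function
`f(y) = k·min(∑ cᵢyᵢ, M)` with `k = 1/minᵢ cᵢ` is an S-feasible EL function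
whose cost equals `(maxᵢ cᵢ)/(minᵢ cᵢ)`. -/
theorem stmt_14 {n : ℕ} [NeZero n] (c : Fin n → ℝ) (hc : ∀ i, 0 < c i)
    (M : ℝ) (hM : 0 < M)
    (S : Set (Fin n → ℝ)) (hS : S = {x : Fin n → ℝ | 0 ≤ x ∧ ∑ i, c i * x i = M})
    (k : ℝ) (hk : k = (Finset.univ.inf' Finset.univ_nonempty c)⁻¹)
    (f : (Fin n → ℝ) → ℝ) (hfdef : f = fun y => k * min (∑ i, c i * y i) M) :
    IsEL n f ∧
    (∀ x ∈ S, (∀ i, 0 < x i) → ∀ (i : Fin n) (dm dp : ℝ),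
      HasLeftPD n f i x dm → HasRightPD n f i x dp → 1 ≤ dm - dp) ∧
    (∀ i, HasRightPD n f i 0 (k * c i)) ∧
    (Finset.univ.sup' Finset.univ_nonempty (fun i => k * c i) =
      Finset.univ.sup' Finset.univ_nonempty c / Finset.univ.inf' Finset.univ_nonempty c) := by
  have hne : (Finset.univ : Finset (Fin n)).Nonempty := Finset.univ_nonempty
  set m := Finset.univ.inf' Finset.univ_nonempty c with hmdef
  have hm0 : 0 < m := by
    obtain ⟨j, _, hje⟩ := Finset.exists_mem_eq_inf' hne c
    rw [hmdef, hje]; exact hc j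
  have hk0 : 0 < k := by rw [hk]; exact inv_pos.mpr hm0
  have hmle : ∀ i, m ≤ c i := fun i => Finset.inf'_le _ (Finset.mem_univ i)
  have hadd : ∀ (x : Fin n → ℝ) (i : Fin n) (t : ℝ),
      ∑ j, c j * (x + t • (Pi.single i 1 : Fin n → ℝ)) j = (∑ j, c j * x j) + t * c i :=
    sum_add_single c
  refine ⟨⟨?_, ?_, ?_, ?_⟩, ?_, ?_, ?_⟩
  · simp [hfdef, min_eq_left hM.le]
  · intro x y hx hy
    subst hfdef
    simp only
    have h1 : (∑ j, c j * (x ⊓ y) j) ≤ ∑ j, c j * x j :=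
      Finset.sum_le_sum fun j _ => mul_le_mul_of_nonneg_left (by simp [Pi.inf_apply, inf_le_left]) (hc j).le
    have h3 : (∑ j, c j * x j) ≤ ∑ j, c j * (x ⊔ y) j :=
      Finset.sum_le_sum fun j _ => mul_le_mul_of_nonneg_left (by simp [Pi.sup_apply, le_sup_left]) (hc j).le
    have h4 : (∑ j, c j * y j) ≤ ∑ j, c j * (x ⊔ y) j :=
      Finset.sum_le_sum fun j _ => mul_le_mul_of_nonneg_left (by simp [Pi.sup_apply, le_sup_right]) (hc j).le
    have h5 : (∑ j, c j * (x ⊓ y) j) + ∑ j, c j * (x ⊔ y) j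
        = (∑ j, c j * x j) + ∑ j, c j * y j := by
      rw [← Finset.sum_add_distrib, ← Finset.sum_add_distrib]
      refine Finset.sum_congr rfl fun j _ => ?_
      rw [← mul_add, ← mul_add, Pi.inf_apply, Pi.sup_apply, min_add_max]
    have key := min_subadd _ _ _ _ M h1 h3 h4 h5
    nlinarith [mul_le_mul_of_nonneg_left key hk0.le]
  · intro x y hx hxy
    subst hfdef
    simp only
    refine mul_le_mul_of_nonneg_left (min_le_min ?_ le_rfl) hk0.le
    exact Finset.sum_le_sum fun j _ => mul_le_mul_of_nonneg_left (hxy j) (hc j).le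
  · intro x i lam eps hx hlam heps
    subst hfdef
    simp only
    rw [hadd, hadd, hadd]
    have key := min_dr ((∑ j, c j * x j) + lam * c i) (∑ j, c j * x j) (eps * c i) M
      (by nlinarith [hc i]) (mul_pos heps (hc i)).le
    nlinarith [mul_le_mul_of_nonneg_left key hk0.le]
  · intro x hx hpos i dm dp hLpd hRpd
    rw [hS] at hx
    obtain ⟨hx0, hxM⟩ := hx
    have hfx : f x = k * M := by rw [hfdef]; simp [hxM]
    -- dp = 0
    have hdp : dp = 0 := by
      refine tendsto_nhds_unique ?_ (tendsto_const_nhds (f := 𝓝[>] (0:ℝ)))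
      refine Filter.Tendsto.congr' ?_ hRpd
      filter_upwards [self_mem_nhdsWithin] with ε hε
      have hε0 : (0:ℝ) < ε := hε
      have e1 : f (x + ε • (Pi.single i 1 : Fin n → ℝ)) = k * M := by
        rw [hfdef]; simp only
        rw [hadd, hxM, min_eq_right (by nlinarith [hc i])]
      rw [e1, hfx, sub_self, zero_div]
    -- dm = k * c i
    have hdm : dm = k * c i := by
      refine tendsto_nhds_unique ?_ (tendsto_const_nhds (f := 𝓝[>] (0:ℝ)))
      refine Filter.Tendsto.congr' ?_ hLpd
      filter_upwards [self_mem_nhdsWithin] with ε hε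
      have hε0 : (0:ℝ) < ε := hε
      have hsub : x - ε • (Pi.single i 1 : Fin n → ℝ) = x + (-ε) • (Pi.single i 1 : Fin n → ℝ) := by
        rw [sub_eq_add_neg, neg_smul]
      rw [hfx, hsub, hfdef]
      simp only
      rw [hadd, hxM, min_eq_left (by nlinarith [hc i])]
      field_simp
      ring
    rw [hdm, hdp, sub_zero, hk]
    rw [inv_mul_eq_div, le_div_iff₀ hm0, one_mul]
    exact hmle i
  · intro i
    unfold HasRightPD
    refine Filter.Tendsto.congr' ?_ (tendsto_const_nhds (α := ℝ))
    have hmem : Set.Ioo (0:ℝ) (M / c i) ∈ 𝓝[>] (0:ℝ) :=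
      Ioo_mem_nhdsGT_of_mem ⟨le_rfl, div_pos hM (hc i)⟩
    filter_upwards [hmem] with ε hε
    have hεM : ε * c i < M := (lt_div_iff₀ (hc i)).mp hε.2
    rw [hfdef]
    simp only
    rw [zero_add, show (∑ j, c j * (ε • (Pi.single i 1 : Fin n → ℝ)) j) = ε * c i by
      have := hadd 0 i ε; simpa using this]
    have h0 : (∑ j, c j * (0 : Fin n → ℝ) j) = 0 := by simp
    rw [h0, min_eq_left hεM.le, min_eq_left hM.le, mul_zero, sub_zero]
    rw [eq_div_iff hε.1.ne']
    ring
  · obtain ⟨j, _, hj⟩ := Finset.exists_mem_eq_sup' hne c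
    apply le_antisymm
    · apply Finset.sup'_le
      intro i _
      rw [hj, hk, inv_mul_eq_div, div_le_div_iff₀ hm0 hm0]
      have : c i ≤ c j := hj ▸ Finset.le_sup' c (Finset.mem_univ i)
      nlinarith
    · rw [hj]
      rw [div_eq_inv_mul, ← hk]
      exact Finset.le_sup' (fun i => k * c i) (Finset.mem_univ j)
end

section
/- Let S ⊂ O² be the graph of a strictly decreasing, strictly convex, continuously differentiable function α on [0, a] with α(0) = b > 0, α(a) = 0, α'(0) ≤ −1 ≤ α'(a) < 0, and let β = α^{-1}. Let T = (t_x, t_y) be the point of S where α'(t_x) = −1, and C = a − t_x + b − t_y. Define f(x,y) = C if x ≥ t_x and y ≥ t_y; f(x,y) = C + min(x − β(y), 0) if x ≥ t_x and y < t_y; f(x,y) = C + min(y − α(x), 0) if x < t_x and y ≥ t_y; and f(x,y) = a − α(x) + b − β(y) otherwise. Then f is an EL function, f is S-feasible, and cost(f) = max(−α'(0), −β'(0)). -/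
open Filter Topology Set

open scoped Classical

/-- S-feasibility of an EL function for a surface `S`. -/
def SFeasible (n : ℕ) (f : (Fin n → ℝ) → ℝ) (S : Set (Fin n → ℝ)) : Prop :=
  ∀ x ∈ S, (∀ i, 0 < x i) → ∀ (i : Fin n) (dm dp : ℝ),
    HasLeftPD n f i x dm → HasRightPD n f i x dp → 1 ≤ dm - dp


private lemma min_shift (u c : ℝ) : min (u - c) 0 = min u c - c := by
  rcases le_total u c with h | h
  · rw [min_eq_left (by linarith : u - c ≤ 0), min_eq_left h]
  · rw [min_eq_right (by linarith : (0:ℝ) ≤ u - c), min_eq_right h]; ring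

private lemma min4 (p q c d : ℝ) (hpq : p ≤ q) (hdc : d ≤ c) :
    min p c + min q d ≤ min q c + min p d := by
  rcases le_total p d with h | h
  · rw [min_eq_left (h.trans hdc), min_eq_left h]
    have h2 : min q d ≤ min q c := min_le_min (le_refl q) hdc
    linarith
  · rw [min_eq_right h, min_eq_right (h.trans hpq)]
    have h2 : min p c ≤ min q c := min_le_min hpq (le_refl c)
    linarith

private lemma drAux (G σ : ℝ → ℝ)
    (hmono : ∀ u v, 0 ≤ u → u ≤ v → σ v ≤ σ u)
    (hUB : ∀ u v, 0 ≤ u → u ≤ v → G v - G u ≤ σ u * (v - u))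
    (hLB : ∀ u v, 0 ≤ u → u ≤ v → σ v * (v - u) ≤ G v - G u)
    (s lam eps : ℝ) (hs : 0 ≤ s) (hl : 0 < lam) (he : 0 < eps) :
    G (s + lam + eps) - G (s + lam) ≤ G (s + eps) - G s := by
  rcases le_total eps lam with h | h
  · have h1 := hUB (s + lam) (s + lam + eps) (by linarith) (by linarith)
    have h2 := hmono (s + eps) (s + lam) (by linarith) (by linarith)
    have h3 := hLB s (s + eps) hs (by linarith)
    have e1 : s + lam + eps - (s + lam) = eps := by ring
    have e2 : s + eps - s = eps := by ring
    rw [e1] at h1; rw [e2] at h3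
    nlinarith [mul_le_mul_of_nonneg_right h2 he.le]
  · have h1 := hUB (s + eps) (s + eps + lam) (by linarith) (by linarith)
    have h2 := hmono (s + lam) (s + eps) (by linarith) (by linarith)
    have h3 := hLB s (s + lam) hs (by linarith)
    have e1 : s + eps + lam - (s + eps) = lam := by ring
    have e2 : s + lam - s = lam := by ring
    rw [e1] at h1; rw [e2] at h3
    have e3 : s + eps + lam = s + lam + eps := by ring
    rw [e3] at h1
    nlinarith [mul_le_mul_of_nonneg_right h2 hl.le]

private lemma rightLim {g : ℝ → ℝ} {x0 L : ℝ} (h : HasDerivAt g L x0) :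
    Tendsto (fun ε : ℝ => (g (x0 + ε) - g x0) / ε) (𝓝[>] (0:ℝ)) (𝓝 L) := by
  have hs := hasDerivAt_iff_tendsto_slope.1 h
  have hmap : Tendsto (fun ε : ℝ => x0 + ε) (𝓝[>] (0:ℝ)) (𝓝[≠] x0) := by
    apply tendsto_nhdsWithin_of_tendsto_nhds_of_eventually_within
    · have h1 : Tendsto (fun ε : ℝ => x0 + ε) (𝓝 0) (𝓝 (x0 + 0)) :=
        (continuous_const.add continuous_id).tendsto 0
      rw [add_zero] at h1
      exact h1.mono_left nhdsWithin_le_nhds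
    · filter_upwards [self_mem_nhdsWithin] with ε hε
      have hε' : (0:ℝ) < ε := hε
      simp only [Set.mem_compl_iff, Set.mem_singleton_iff]
      intro hc
      have : ε = 0 := by linarith [congrArg (fun t => t - x0) hc]
      linarith
  have h2 := hs.comp hmap
  refine h2.congr fun ε => ?_
  simp only [Function.comp_apply, slope_def_field]
  rw [add_sub_cancel_left]

private lemma leftLim {g : ℝ → ℝ} {x0 L : ℝ} (h : HasDerivAt g L x0) :
    Tendsto (fun ε : ℝ => (g x0 - g (x0 - ε)) / ε) (𝓝[>] (0:ℝ)) (𝓝 L) := by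
  have hs := hasDerivAt_iff_tendsto_slope.1 h
  have hmap : Tendsto (fun ε : ℝ => x0 - ε) (𝓝[>] (0:ℝ)) (𝓝[≠] x0) := by
    apply tendsto_nhdsWithin_of_tendsto_nhds_of_eventually_within
    · have h1 : Tendsto (fun ε : ℝ => x0 - ε) (𝓝 0) (𝓝 (x0 - 0)) :=
        (continuous_const.sub continuous_id).tendsto 0
      rw [sub_zero] at h1
      exact h1.mono_left nhdsWithin_le_nhds
    · filter_upwards [self_mem_nhdsWithin] with ε hε
      have hε' : (0:ℝ) < ε := hε
      simp only [Set.mem_compl_iff, Set.mem_singleton_iff]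
      intro hc
      have : ε = 0 := by linarith [congrArg (fun t => t - x0) hc]
      linarith
  have h2 := hs.comp hmap
  refine h2.congr fun ε => ?_
  simp only [Function.comp_apply, slope_def_field]
  have e : x0 - ε - x0 = -ε := by ring
  rw [e, div_neg, ← neg_div, neg_sub]

private lemma dirAux (γ δf γ' : ℝ → ℝ) (tX tY Cc A B : ℝ)
    (htX0 : 0 ≤ tX)
    (hγtX : γ tX = tY)
    (htan : ∀ u, 0 ≤ u → u ≤ tX → ∀ v, 0 ≤ v → v ≤ tX → γ u + γ' u * (v - u) ≤ γ v)
    (hγ'le : ∀ u, 0 ≤ u → u ≤ tX → γ' u ≤ -1)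
    (hCc : A + B = Cc + tX + tY)
    (y : ℝ) (hy : 0 ≤ y)
    (hD : y < tY → tX < δf y)
    (G : ℝ → ℝ)
    (hG : ∀ x, G x = if tX ≤ x ∧ tY ≤ y then Cc else if tX ≤ x then Cc + min (x - δf y) 0
        else if tY ≤ y then Cc + min (y - γ x) 0 else A - γ x + (B - δf y)) :
    ∃ σ : ℝ → ℝ, (∀ u v, 0 ≤ u → u ≤ v → σ v ≤ σ u) ∧ (∀ u, 0 ≤ u → 0 ≤ σ u) ∧
      (∀ u v, 0 ≤ u → u ≤ v → G v - G u ≤ σ u * (v - u)) ∧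
      (∀ u v, 0 ≤ u → u ≤ v → σ v * (v - u) ≤ G v - G u) := by
  have hanti : ∀ u v, 0 ≤ u → u ≤ v → v ≤ tX → γ v + (v - u) ≤ γ u := by
    intro u v hu huv hv
    have h1 := htan v (hu.trans huv) hv u hu (huv.trans hv)
    have h2 := hγ'le v (hu.trans huv) hv
    nlinarith
  have hmono' : ∀ u v, 0 ≤ u → u ≤ v → v ≤ tX → γ' u ≤ γ' v := by
    intro u v hu huv hv
    rcases eq_or_lt_of_le huv with rfl | hlt
    · exact le_refl _
    have h1 := htan u hu (huv.trans hv) v (hu.trans huv) hv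
    have h2 := htan v (hu.trans huv) hv u hu (huv.trans hv)
    nlinarith
  by_cases hyY : tY ≤ y
  · have evY : ∀ x, G x = Cc + min (y - γ (min x tX)) 0 := by
      intro x
      rw [hG]
      by_cases hx : tX ≤ x
      · rw [if_pos ⟨hx, hyY⟩, min_eq_right hx, hγtX,
          min_eq_right (by linarith : (0:ℝ) ≤ y - tY), add_zero]
      · push_neg at hx
        rw [if_neg (fun hc => hx.not_ge hc.1), if_neg hx.not_ge, if_pos hyY, min_eq_left hx.le]
    refine ⟨fun u => if γ (min u tX) ≤ y then 0 else -γ' u, ?_, ?_, ?_, ?_⟩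
    · intro u v hu huv
      dsimp only
      by_cases hv' : γ (min v tX) ≤ y
      · rw [if_pos hv']
        by_cases hu' : γ (min u tX) ≤ y
        · rw [if_pos hu']
        · rw [if_neg hu']
          have huX : u < tX := by
            by_contra hc
            push_neg at hc
            rw [min_eq_right hc, hγtX] at hu'
            exact hu' hyY
          have := hγ'le u hu huX.le
          linarith
      · rw [if_neg hv']
        have hvX : v < tX := by
          by_contra hc; push_neg at hc
          rw [min_eq_right hc, hγtX] at hv'; exact hv' hyY
        have huX : u < tX := lt_of_le_of_lt huv hvX
        have hu' : ¬ γ (min u tX) ≤ y := by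
          rw [min_eq_left huX.le]
          rw [min_eq_left hvX.le] at hv'
          push_neg at hv' ⊢
          have := hanti u v hu huv hvX.le
          linarith
        rw [if_neg hu']
        have := hmono' u v hu huv hvX.le
        linarith
    · intro u hu
      dsimp only
      by_cases hu' : γ (min u tX) ≤ y
      · rw [if_pos hu']
      · rw [if_neg hu']
        have huX : u < tX := by
          by_contra hc; push_neg at hc
          rw [min_eq_right hc, hγtX] at hu'; exact hu' hyY
        have := hγ'le u hu huX.le
        linarith
    · intro u v hu huv
      dsimp only
      rw [evY v, evY u]
      by_cases hu' : γ (min u tX) ≤ y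
      · rw [if_pos hu', min_eq_right (by linarith : (0:ℝ) ≤ y - γ (min u tX))]
        have := min_le_right (y - γ (min v tX)) 0
        linarith
      · rw [if_neg hu']
        have huX : u < tX := by
          by_contra hc; push_neg at hc
          rw [min_eq_right hc, hγtX] at hu'; exact hu' hyY
        push_neg at hu'
        rw [min_eq_left huX.le] at hu'
        rw [min_eq_left huX.le]
        have hw0 : 0 ≤ min v tX := le_min (hu.trans huv) htX0
        have hwX : min v tX ≤ tX := min_le_right _ _
        have hwu : u ≤ min v tX := le_min huv huX.le
        have hwv : min v tX ≤ v := min_le_left _ _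
        have ht := htan u hu huX.le (min v tX) hw0 hwX
        have hne : (1:ℝ) ≤ -γ' u := by have := hγ'le u hu huX.le; linarith
        have hmm : min (y - γ (min v tX)) 0 ≤ y - γ (min v tX) := min_le_left _ _
        have hmu : min (y - γ u) 0 = y - γ u := min_eq_left (by linarith)
        rw [hmu]
        nlinarith
    · intro u v hu huv
      dsimp only
      rw [evY v, evY u]
      by_cases hv' : γ (min v tX) ≤ y
      · rw [if_pos hv', min_eq_right (by linarith : (0:ℝ) ≤ y - γ (min v tX))]
        have := min_le_right (y - γ (min u tX)) 0
        linarith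
      · rw [if_neg hv']
        have hvX : v < tX := by
          by_contra hc; push_neg at hc
          rw [min_eq_right hc, hγtX] at hv'; exact hv' hyY
        have huX : u < tX := lt_of_le_of_lt huv hvX
        push_neg at hv'
        rw [min_eq_left hvX.le] at hv'
        rw [min_eq_left hvX.le, min_eq_left huX.le]
        have hgu : γ v + (v - u) ≤ γ u := hanti u v hu huv hvX.le
        have hmv : min (y - γ v) 0 = y - γ v := min_eq_left (by linarith)
        have hmu : min (y - γ u) 0 = y - γ u := min_eq_left (by linarith)
        rw [hmv, hmu]
        have ht := htan v (hu.trans huv) hvX.le u hu (huv.trans hvX.le)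
        nlinarith
  · push_neg at hyY
    have hDlt : tX < δf y := hD hyY
    have evH : ∀ x, G x = Cc - δf y + (if tX ≤ x then min x (δf y) else tX + tY - γ x) := by
      intro x
      rw [hG]
      rw [if_neg (fun hc => hyY.not_ge hc.2)]
      by_cases hx : tX ≤ x
      · rw [if_pos hx, if_pos hx]
        rcases le_total x (δf y) with h | h
        · rw [min_eq_left (by linarith : x - δf y ≤ 0), min_eq_left h]; ring
        · rw [min_eq_right (by linarith : (0:ℝ) ≤ x - δf y), min_eq_right h]; ring
      · rw [if_neg hx, if_neg hx, if_neg hyY.not_ge]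
        linarith
    refine ⟨fun u => if u < tX then -γ' u else if u < δf y then 1 else 0, ?_, ?_, ?_, ?_⟩
    · intro u v hu huv
      dsimp only
      by_cases hvX : v < tX
      · have huX : u < tX := lt_of_le_of_lt huv hvX
        rw [if_pos hvX, if_pos huX]
        have := hmono' u v hu huv hvX.le
        linarith
      · rw [if_neg hvX]
        by_cases huX : u < tX
        · rw [if_pos huX]
          have h1 := hγ'le u hu huX.le
          by_cases hvD : v < δf y
          · rw [if_pos hvD]; linarith
          · rw [if_neg hvD]; linarith
        · rw [if_neg huX]
          push_neg at huX hvX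
          by_cases huD : u < δf y
          · rw [if_pos huD]
            by_cases hvD : v < δf y
            · rw [if_pos hvD]
            · rw [if_neg hvD]; linarith
          · rw [if_neg huD]
            push_neg at huD
            rw [if_neg (not_lt.2 (huD.trans huv))]
    · intro u hu
      dsimp only
      by_cases huX : u < tX
      · rw [if_pos huX]; have := hγ'le u hu huX.le; linarith
      · rw [if_neg huX]
        by_cases huD : u < δf y
        · rw [if_pos huD]; linarith
        · rw [if_neg huD]
    · intro u v hu huv
      dsimp only
      rw [evH v, evH u]
      by_cases huX : u < tX
      · rw [if_pos huX, if_neg (not_le.2 huX)]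
        have hne : (1:ℝ) ≤ -γ' u := by have := hγ'le u hu huX.le; linarith
        by_cases hvX : tX ≤ v
        · rw [if_pos hvX]
          have h1 : min v (δf y) ≤ v := min_le_left _ _
          have ht := htan u hu huX.le tX htX0 (le_refl tX)
          rw [hγtX] at ht
          nlinarith [mul_le_mul_of_nonneg_right hne (by linarith : (0:ℝ) ≤ v - tX)]
        · push_neg at hvX
          rw [if_neg (not_le.2 hvX)]
          have ht := htan u hu huX.le v (hu.trans huv) hvX.le
          nlinarith
      · push_neg at huX
        have hvX : tX ≤ v := huX.trans huv
        rw [if_pos hvX, if_pos huX, if_neg (not_lt.2 huX)]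
        by_cases huD : u < δf y
        · rw [if_pos huD, min_eq_left huD.le]
          have := min_le_left v (δf y)
          linarith
        · rw [if_neg huD]
          push_neg at huD
          rw [min_eq_right huD, min_eq_right (huD.trans huv)]
          linarith
    · intro u v hu huv
      dsimp only
      rw [evH v, evH u]
      by_cases hvX : v < tX
      · have huX : u < tX := lt_of_le_of_lt huv hvX
        rw [if_pos hvX, if_neg (not_le.2 hvX), if_neg (not_le.2 huX)]
        have ht := htan v (hu.trans huv) hvX.le u hu (huv.trans hvX.le)
        nlinarith
      · push_neg at hvX
        rw [if_neg (not_lt.2 hvX), if_pos hvX]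
        by_cases hvD : v < δf y
        · rw [if_pos hvD, min_eq_left hvD.le]
          by_cases huX : tX ≤ u
          · rw [if_pos huX, min_eq_left (huv.trans hvD.le)]
            linarith
          · push_neg at huX
            rw [if_neg (not_le.2 huX)]
            have hgu := hanti u tX hu huX.le (le_refl tX)
            rw [hγtX] at hgu
            linarith
        · rw [if_neg hvD]
          push_neg at hvD
          by_cases huX : tX ≤ u
          · rw [if_pos huX, min_eq_right hvD]
            have := min_le_right u (δf y)
            linarith
          · push_neg at huX
            rw [if_neg (not_le.2 huX), min_eq_right hvD]
            have hgu := hanti u tX hu huX.le (le_refl tX)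
            rw [hγtX] at hgu
            linarith

set_option maxHeartbeats 4000000 in
/-- the plateau construction for a strictly convex curve `S`
is an optimal S-feasible EL function of cost `max(−α'(0), −β'(0))`. -/
theorem stmt_15 (a b : ℝ) (ha : 0 < a) (hb : 0 < b)
    (α β α' β' : ℝ → ℝ)
    (hαd : ∀ x ∈ Set.Icc 0 a, HasDerivAt α (α' x) x)
    (hα'c : ContinuousOn α' (Set.Icc 0 a))
    (hanti : StrictAntiOn α (Set.Icc 0 a))
    (hconv : StrictConvexOn ℝ (Set.Icc 0 a) α)
    (hα0 : α 0 = b) (hαa : α a = 0)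
    (hs0 : α' 0 ≤ -1) (hsa : -1 ≤ α' a) (hsa' : α' a < 0)
    (hβα : ∀ x ∈ Set.Icc 0 a, β (α x) = x)
    (hαβ : ∀ y ∈ Set.Icc 0 b, α (β y) = y)
    (hβd : ∀ y ∈ Set.Icc 0 b, HasDerivAt β (β' y) y)
    (tx ty : ℝ) (htx : tx ∈ Set.Icc 0 a) (hT : α' tx = -1) (hty : ty = α tx)
    (C : ℝ) (hC : C = a - tx + b - ty)
    (S : Set (Fin 2 → ℝ))
    (hS : S = {p : Fin 2 → ℝ | p 0 ∈ Set.Icc 0 a ∧ p 1 = α (p 0)})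
    (f : (Fin 2 → ℝ) → ℝ)
    (hfdef : f = fun p =>
      if tx ≤ p 0 ∧ ty ≤ p 1 then C
      else if tx ≤ p 0 then C + min (p 0 - β (p 1)) 0
      else if ty ≤ p 1 then C + min (p 1 - α (p 0)) 0
      else a - α (p 0) + b - β (p 1)) :
    IsEL 2 f ∧ SFeasible 2 f S ∧
      ∃ d0 d1 : ℝ, HasRightPD 2 f 0 0 d0 ∧ HasRightPD 2 f 1 0 d1 ∧
        max d0 d1 = max (-(α' 0)) (-(β' 0)) := by
  have h0a : (0:ℝ) ∈ Icc (0:ℝ) a := ⟨le_refl _, ha.le⟩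
  have haa : a ∈ Icc (0:ℝ) a := ⟨ha.le, le_refl _⟩
  have h0b : (0:ℝ) ∈ Icc (0:ℝ) b := ⟨le_refl _, hb.le⟩
  have htx0 : 0 ≤ tx := htx.1
  have htxa : tx ≤ a := htx.2
  have hαcont : ContinuousOn α (Icc 0 a) := fun u hu => (hαd u hu).continuousAt.continuousWithinAt
  have hαle : ∀ u v, u ∈ Icc (0:ℝ) a → v ∈ Icc (0:ℝ) a → u ≤ v → α v ≤ α u := by
    intro u v hu hv huv
    rcases eq_or_lt_of_le huv with rfl | h
    · exact le_refl _
    · exact (hanti hu hv h).le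
  have hty_nonneg : 0 ≤ ty := by
    rw [hty, ← hαa]; exact hαle tx a htx haa htxa
  have hty_le_b : ty ≤ b := by
    rw [hty, ← hα0]; exact hαle 0 tx h0a htx htx0
  have htyb : ty ∈ Icc (0:ℝ) b := ⟨hty_nonneg, hty_le_b⟩
  have htanα : ∀ u, u ∈ Icc (0:ℝ) a → ∀ v, v ∈ Icc (0:ℝ) a → α u + α' u * (v - u) ≤ α v := by
    intro u hu v hv
    rcases lt_trichotomy u v with h | rfl | h
    · have hsl := hconv.convexOn.le_slope_of_hasDerivAt hu hv h (hαd u hu)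
      rw [slope_def_field] at hsl
      have h2 : 0 < v - u := by linarith
      have := (le_div_iff₀ h2).1 hsl
      linarith
    · simp
    · have hsl := hconv.convexOn.slope_le_of_hasDerivAt hv hu h (hαd u hu)
      rw [slope_def_field] at hsl
      have h2 : 0 < u - v := by linarith
      have := (div_le_iff₀ h2).1 hsl
      nlinarith
  have hα'mono : ∀ u v, u ∈ Icc (0:ℝ) a → v ∈ Icc (0:ℝ) a → u ≤ v → α' u ≤ α' v := by
    intro u v hu hv huv
    rcases eq_or_lt_of_le huv with rfl | h
    · exact le_refl _
    have h1 := htanα u hu v hv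
    have h2 := htanα v hv u hu
    nlinarith
  have hα'neg : ∀ u, u ∈ Icc (0:ℝ) a → α' u < 0 := fun u hu =>
    lt_of_le_of_lt (hα'mono u a hu haa hu.2) hsa'
  have hα'le1 : ∀ u, 0 ≤ u → u ≤ tx → α' u ≤ -1 := by
    intro u h1 h2
    have h3 := hα'mono u tx ⟨h1, h2.trans htxa⟩ htx h2
    rw [hT] at h3
    exact h3
  have hβval : ∀ w, w ∈ Icc (0:ℝ) b → β w ∈ Icc (0:ℝ) a ∧ α (β w) = w := by
    intro w hw
    have hsub : Icc (0:ℝ) b ⊆ α '' (Icc 0 a) := by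
      have := intermediate_value_Icc' ha.le hαcont
      rwa [hαa, hα0] at this
    obtain ⟨u, hu, huw⟩ := hsub hw
    have he : β w = u := by rw [← huw, hβα u hu]
    rw [he]; exact ⟨hu, huw⟩
  have hβ0 : β 0 = a := by have := hβα a haa; rwa [hαa] at this
  have hβty : β ty = tx := by rw [hty, hβα tx htx]
  have hβanti : ∀ w1 w2, w1 ∈ Icc (0:ℝ) b → w2 ∈ Icc (0:ℝ) b → w1 < w2 → β w2 < β w1 := by
    intro w1 w2 h1 h2 h12
    obtain ⟨hm1, he1⟩ := hβval w1 h1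
    obtain ⟨hm2, he2⟩ := hβval w2 h2
    by_contra hc
    push_neg at hc
    have := hαle _ _ hm1 hm2 hc
    rw [he1, he2] at this
    linarith
  have hβle : ∀ w1 w2, w1 ∈ Icc (0:ℝ) b → w2 ∈ Icc (0:ℝ) b → w1 ≤ w2 → β w2 ≤ β w1 := by
    intro w1 w2 h1 h2 h12
    rcases eq_or_lt_of_le h12 with rfl | h
    · exact le_refl _
    · exact (hβanti w1 w2 h1 h2 h).le
  have hβlt : ∀ w, 0 ≤ w → w < ty → tx < β w := by
    intro w h1 h2
    rw [← hβty]
    exact hβanti w ty ⟨h1, h2.le.trans hty_le_b⟩ htyb h2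
  have hαlt : ∀ u, 0 ≤ u → u < tx → ty < α u := by
    intro u h1 h2
    rw [hty]
    exact hanti ⟨h1, h2.le.trans htxa⟩ htx h2
  have hβ'eq : ∀ w, w ∈ Icc (0:ℝ) b → β' w * α' (β w) = 1 := by
    intro w hw
    obtain ⟨hm, he⟩ := hβval w hw
    have hco : HasDerivWithinAt (β ∘ α) (β' w * α' (β w)) (Icc 0 a) (β w) := by
      have h1 : HasDerivAt β (β' w) (α (β w)) := by rw [he]; exact hβd w hw
      exact h1.comp_hasDerivWithinAt _ ((hαd _ hm).hasDerivWithinAt)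
    have hid : HasDerivWithinAt (β ∘ α) 1 (Icc 0 a) (β w) := by
      have h2 : HasDerivWithinAt id 1 (Icc (0:ℝ) a) (β w) := (hasDerivAt_id _).hasDerivWithinAt
      exact h2.congr (fun u hu => hβα u hu) (hβα _ hm)
    exact UniqueDiffWithinAt.eq_deriv _ ((uniqueDiffOn_Icc ha) _ hm) hco hid
  have htanβ : ∀ u, 0 ≤ u → u ≤ ty → ∀ v, 0 ≤ v → v ≤ ty → β u + β' u * (v - u) ≤ β v := by
    intro u hu huty v hv hvty
    have hub : u ∈ Icc (0:ℝ) b := ⟨hu, huty.trans hty_le_b⟩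
    have hvb : v ∈ Icc (0:ℝ) b := ⟨hv, hvty.trans hty_le_b⟩
    obtain ⟨hmu, heu⟩ := hβval u hub
    obtain ⟨hmv, hev⟩ := hβval v hvb
    have ht := htanα (β u) hmu (β v) hmv
    rw [heu, hev] at ht
    have hchain := hβ'eq u hub
    have hneg : α' (β u) < 0 := hα'neg _ hmu
    have hβ'neg : β' u < 0 := by nlinarith
    have h4 : β' u * (α' (β u) * (β v - β u)) = β v - β u := by
      rw [← mul_assoc, hchain, one_mul]
    have h5 : α' (β u) * (β v - β u) ≤ v - u := by linarith
    have h6 := mul_le_mul_of_nonpos_left h5 hβ'neg.le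
    linarith
  have hβ'le1 : ∀ u, 0 ≤ u → u ≤ ty → β' u ≤ -1 := by
    intro u hu huty
    have hub : u ∈ Icc (0:ℝ) b := ⟨hu, huty.trans hty_le_b⟩
    obtain ⟨hmu, heu⟩ := hβval u hub
    have hchain := hβ'eq u hub
    have htxβ : tx ≤ β u := by
      rw [← hβty]; exact hβle u ty hub htyb huty
    have hs1 : -1 ≤ α' (β u) := by
      rw [← hT]; exact hα'mono tx (β u) htx hmu htxβ
    have hs2 : α' (β u) < 0 := hα'neg _ hmu
    by_contra hc
    push_neg at hc
    have hβ'neg : β' u < 0 := by nlinarith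
    nlinarith [mul_pos (by linarith : (0:ℝ) < β' u + 1) (by linarith : (0:ℝ) < -α' (β u))]
  set F2 : ℝ → ℝ → ℝ := fun u w =>
    if tx ≤ u ∧ ty ≤ w then C
    else if tx ≤ u then C + min (u - β w) 0
    else if ty ≤ w then C + min (w - α u) 0
    else a - α u + b - β w with hF2
  have hfF : ∀ p : Fin 2 → ℝ, f p = F2 (p 0) (p 1) := by
    intro p; rw [hfdef, hF2]
  have he1 : ∀ u w, tx ≤ u → ty ≤ w → F2 u w = C := by
    intro u w h1 h2
    simp only [hF2]
    rw [if_pos (⟨h1, h2⟩ : tx ≤ u ∧ ty ≤ w)]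
  have he2 : ∀ u w, tx ≤ u → w < ty → F2 u w = C + (min u (β w) - β w) := by
    intro u w h1 h2
    simp only [hF2]
    rw [if_neg (fun hc : tx ≤ u ∧ ty ≤ w => absurd hc.2 (not_le.2 h2)), if_pos h1, min_shift]
  have he3 : ∀ u w, u < tx → ty ≤ w → F2 u w = C + (min w (α u) - α u) := by
    intro u w h1 h2
    simp only [hF2]
    rw [if_neg (fun hc : tx ≤ u ∧ ty ≤ w => absurd hc.1 (not_le.2 h1)), if_neg (not_le.2 h1),
      if_pos h2, min_shift]
  have he4 : ∀ u w, u < tx → w < ty → F2 u w = a - α u + b - β w := by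
    intro u w h1 h2
    simp only [hF2]
    rw [if_neg (fun hc : tx ≤ u ∧ ty ≤ w => absurd hc.1 (not_le.2 h1)), if_neg (not_le.2 h1),
      if_neg (not_le.2 h2)]
  have heY : ∀ u w, 0 ≤ u → ty ≤ w → F2 u w = C + min (w - α (min u tx)) 0 := by
    intro u w hu hw
    by_cases h : tx ≤ u
    · rw [he1 u w h hw, min_eq_right h, show α tx = ty from hty.symm,
        min_eq_right (by linarith : (0:ℝ) ≤ w - ty), add_zero]
    · push_neg at h
      rw [he3 u w h hw, min_eq_left h.le, min_shift]
  
  have hXpack : ∀ w, 0 ≤ w → ∃ σ : ℝ → ℝ,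
      (∀ u v, 0 ≤ u → u ≤ v → σ v ≤ σ u) ∧ (∀ u, 0 ≤ u → 0 ≤ σ u) ∧
      (∀ u v, 0 ≤ u → u ≤ v → F2 v w - F2 u w ≤ σ u * (v - u)) ∧
      (∀ u v, 0 ≤ u → u ≤ v → σ v * (v - u) ≤ F2 v w - F2 u w) := by
    intro w hw
    exact dirAux α β α' tx ty C a b htx0 hty.symm
      (fun u hu hutx v hv hvtx => htanα u ⟨hu, hutx.trans htxa⟩ v ⟨hv, hvtx.trans htxa⟩)
      hα'le1 (by linarith) w hw (fun hlt => hβlt w hw hlt)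
      (fun u => F2 u w)
      (by intro x; simp only [hF2]; split_ifs <;> ring)
  have hYpack : ∀ u, 0 ≤ u → ∃ σ : ℝ → ℝ,
      (∀ w1 w2, 0 ≤ w1 → w1 ≤ w2 → σ w2 ≤ σ w1) ∧ (∀ w1, 0 ≤ w1 → 0 ≤ σ w1) ∧
      (∀ w1 w2, 0 ≤ w1 → w1 ≤ w2 → F2 u w2 - F2 u w1 ≤ σ w1 * (w2 - w1)) ∧
      (∀ w1 w2, 0 ≤ w1 → w1 ≤ w2 → σ w2 * (w2 - w1) ≤ F2 u w2 - F2 u w1) := by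
    intro u hu
    exact dirAux β α β' ty tx C b a hty_nonneg hβty
      (fun p hp hpty q hq hqty => htanβ p hp hpty q hq hqty)
      hβ'le1 (by linarith) u hu (fun hlt => hαlt u hu hlt)
      (fun w => F2 u w)
      (by
        intro w'
        by_cases h1 : tx ≤ u <;> by_cases h2 : ty ≤ w' <;>
          simp only [hF2, h1, h2, and_true, and_false, true_and, false_and,
            if_true, if_false] <;>
          first
          | rfl
          | ring)
  have hmonoF : ∀ u v w, 0 ≤ u → u ≤ v → 0 ≤ w → F2 u w ≤ F2 v w := by
    intro u v w hu huv hw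
    obtain ⟨σ, hm, hn, hub, hlb⟩ := hXpack w hw
    have h1 := hlb u v hu huv
    have h2 := hn v (hu.trans huv)
    nlinarith [mul_nonneg h2 (by linarith : (0:ℝ) ≤ v - u)]
  have hmonoG : ∀ u w1 w2, 0 ≤ u → 0 ≤ w1 → w1 ≤ w2 → F2 u w1 ≤ F2 u w2 := by
    intro u w1 w2 hu hw1 h12
    obtain ⟨σ, hm, hn, hub, hlb⟩ := hYpack u hu
    have h1 := hlb w1 w2 hw1 h12
    have h2 := hn w2 (hw1.trans h12)
    nlinarith [mul_nonneg h2 (by linarith : (0:ℝ) ≤ w2 - w1)]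
  have hDD : ∀ x1 x2 y1 y2, 0 ≤ x1 → x1 ≤ x2 → 0 ≤ y1 → y1 ≤ y2 →
      F2 x1 y1 + F2 x2 y2 ≤ F2 x1 y2 + F2 x2 y1 := by
    intro x1 x2 y1 y2 hx1 h12 hy1 h12'
    rcases lt_or_ge x2 tx with hx2 | hx2
    · have hx1' : x1 < tx := lt_of_le_of_lt h12 hx2
      have hm1 : x1 ∈ Icc (0:ℝ) a := ⟨hx1, (h12.trans hx2.le).trans htxa⟩
      have hm2 : x2 ∈ Icc (0:ℝ) a := ⟨hx1.trans h12, hx2.le.trans htxa⟩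
      have hαx : α x2 ≤ α x1 := hαle x1 x2 hm1 hm2 h12
      rcases lt_or_ge y2 ty with hy2 | hy2
      · have hy1' : y1 < ty := lt_of_le_of_lt h12' hy2
        rw [he4 _ _ hx1' hy1', he4 _ _ hx2 hy2, he4 _ _ hx1' hy2, he4 _ _ hx2 hy1']
        linarith
      · rcases lt_or_ge y1 ty with hy1' | hy1'
        · rw [he4 _ _ hx1' hy1', he3 _ _ hx2 hy2, he3 _ _ hx1' hy2, he4 _ _ hx2 hy1']
          have := min_le_min (le_refl y2) hαx
          linarith
        · rw [he3 _ _ hx1' hy1', he3 _ _ hx2 hy2, he3 _ _ hx1' hy2, he3 _ _ hx2 hy1']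
          have := min4 y1 y2 (α x1) (α x2) h12' hαx
          linarith
    · rcases lt_or_ge x1 tx with hx1' | hx1'
      · rcases lt_or_ge y2 ty with hy2 | hy2
        · have hy1' : y1 < ty := lt_of_le_of_lt h12' hy2
          have hb1 : y1 ∈ Icc (0:ℝ) b := ⟨hy1, (h12'.trans hy2.le).trans hty_le_b⟩
          have hb2 : y2 ∈ Icc (0:ℝ) b := ⟨hy1.trans h12', hy2.le.trans hty_le_b⟩
          have hβy : β y2 ≤ β y1 := hβle y1 y2 hb1 hb2 h12'
          rw [he4 _ _ hx1' hy1', he2 _ _ hx2 hy2, he4 _ _ hx1' hy2, he2 _ _ hx2 hy1']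
          have := min_le_min (le_refl x2) hβy
          linarith
        · rcases lt_or_ge y1 ty with hy1' | hy1'
          · rw [he4 _ _ hx1' hy1', he1 _ _ hx2 hy2, he3 _ _ hx1' hy2, he2 _ _ hx2 hy1']
            have h1 : ty ≤ min y2 (α x1) := le_min hy2 (hαlt x1 hx1 hx1').le
            have h2 : tx ≤ min x2 (β y1) := le_min hx2 (hβlt y1 hy1 hy1').le
            linarith
          · rw [he3 _ _ hx1' hy1', he1 _ _ hx2 hy2, he3 _ _ hx1' hy2, he1 _ _ hx2 hy1']
            have := min_le_min h12' (le_refl (α x1))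
            linarith
      · rcases lt_or_ge y2 ty with hy2 | hy2
        · have hy1' : y1 < ty := lt_of_le_of_lt h12' hy2
          have hb1 : y1 ∈ Icc (0:ℝ) b := ⟨hy1, (h12'.trans hy2.le).trans hty_le_b⟩
          have hb2 : y2 ∈ Icc (0:ℝ) b := ⟨hy1.trans h12', hy2.le.trans hty_le_b⟩
          have hβy : β y2 ≤ β y1 := hβle y1 y2 hb1 hb2 h12'
          rw [he2 _ _ hx1' hy1', he2 _ _ hx2 hy2, he2 _ _ hx1' hy2, he2 _ _ hx2 hy1']
          have := min4 x1 x2 (β y1) (β y2) h12 hβy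
          linarith
        · rcases lt_or_ge y1 ty with hy1' | hy1'
          · rw [he2 _ _ hx1' hy1', he1 _ _ hx2 hy2, he1 _ _ hx1' hy2, he2 _ _ hx2 hy1']
            have := min_le_min h12 (le_refl (β y1))
            linarith
          · rw [he1 _ _ hx1' hy1', he1 _ _ hx2 hy2, he1 _ _ hx1' hy2, he1 _ _ hx2 hy1']
  have hF00 : F2 0 0 = 0 := by
    rcases lt_or_ge 0 tx with h | h
    · rcases lt_or_ge 0 ty with h2 | h2
      · rw [he4 0 0 h h2, hα0, hβ0]; ring
      · have hty0 : ty = 0 := le_antisymm h2 hty_nonneg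
        have htxa' : tx = a := hanti.injOn htx haa (by rw [← hty, hty0, hαa])
        rw [he3 0 0 h (le_of_eq hty0), hα0, min_eq_left hb.le, hC, hty0, htxa']; ring
    · have htx0' : tx = 0 := le_antisymm h htx0
      have hty0 : ty = b := by rw [hty, htx0', hα0]
      rw [he2 0 0 (le_of_eq htx0') (by rw [hty0]; exact hb), hβ0, min_eq_left ha.le,
        hC, htx0', hty0]; ring
  
  have hne10 : (1 : Fin 2) ≠ 0 := by decide
  have hne01 : (0 : Fin 2) ≠ 1 := by decide
  refine ⟨?_, ?_, ?_⟩
  · unfold IsEL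
    refine ⟨?_, ?_, ?_, ?_⟩
    · rw [hfF]
      simpa using hF00
    · intro x y hx hy
      have hx0 : (0:ℝ) ≤ x 0 := by simpa using (Pi.le_def.mp hx) 0
      have hx1 : (0:ℝ) ≤ x 1 := by simpa using (Pi.le_def.mp hx) 1
      have hy0 : (0:ℝ) ≤ y 0 := by simpa using (Pi.le_def.mp hy) 0
      have hy1 : (0:ℝ) ≤ y 1 := by simpa using (Pi.le_def.mp hy) 1
      rw [hfF (x ⊓ y), hfF (x ⊔ y), hfF x, hfF y]
      simp only [Pi.inf_apply, Pi.sup_apply]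
      rcases le_total (x 0) (y 0) with h0 | h0 <;> rcases le_total (x 1) (y 1) with h1 | h1
      · rw [min_eq_left h0, min_eq_left h1, max_eq_right h0, max_eq_right h1]
      · rw [min_eq_left h0, min_eq_right h1, max_eq_right h0, max_eq_left h1]
        have := hDD (x 0) (y 0) (y 1) (x 1) hx0 h0 hy1 h1
        linarith
      · rw [min_eq_right h0, min_eq_left h1, max_eq_left h0, max_eq_right h1]
        have := hDD (y 0) (x 0) (x 1) (y 1) hy0 h0 hx1 h1
        linarith
      · rw [min_eq_right h0, min_eq_right h1, max_eq_left h0, max_eq_left h1]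
        linarith
    · intro x y hx hxy
      have hx0 : (0:ℝ) ≤ x 0 := by simpa using (Pi.le_def.mp hx) 0
      have hx1 : (0:ℝ) ≤ x 1 := by simpa using (Pi.le_def.mp hx) 1
      have h0 : x 0 ≤ y 0 := (Pi.le_def.mp hxy) 0
      have h1 : x 1 ≤ y 1 := (Pi.le_def.mp hxy) 1
      rw [hfF x, hfF y]
      calc F2 (x 0) (x 1) ≤ F2 (y 0) (x 1) := hmonoF _ _ _ hx0 h0 hx1
        _ ≤ F2 (y 0) (y 1) := hmonoG _ _ _ (hx0.trans h0) hx1 h1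
    · intro x i lam eps hx hlam heps
      have hx0 : (0:ℝ) ≤ x 0 := by simpa using (Pi.le_def.mp hx) 0
      have hx1 : (0:ℝ) ≤ x 1 := by simpa using (Pi.le_def.mp hx) 1
      fin_cases i
      · obtain ⟨σ, hm, hn, hub, hlb⟩ := hXpack (x 1) hx1
        have key := drAux (fun u => F2 u (x 1)) σ hm hub hlb (x 0) lam eps hx0 hlam heps
        rw [hfF, hfF, hfF, hfF]
        simp only [Fin.mk_zero, Fin.mk_one, Fin.isValue, Pi.add_apply, Pi.smul_apply,
          Pi.single_eq_same, Pi.single_eq_of_ne hne10, smul_eq_mul, mul_one, mul_zero, add_zero]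
        exact key
      · obtain ⟨σ, hm, hn, hub, hlb⟩ := hYpack (x 0) hx0
        have key := drAux (fun w => F2 (x 0) w) σ hm hub hlb (x 1) lam eps hx1 hlam heps
        rw [hfF, hfF, hfF, hfF]
        simp only [Fin.mk_zero, Fin.mk_one, Fin.isValue, Pi.add_apply, Pi.smul_apply,
          Pi.single_eq_same, Pi.single_eq_of_ne hne01, smul_eq_mul, mul_one, mul_zero, add_zero]
        exact key
  · unfold SFeasible
    intro p hpS hppos i dm dp hdm hdp
    unfold HasLeftPD at hdm
    unfold HasRightPD at hdp
    rw [hS] at hpS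
    obtain ⟨hp0m, hp1e⟩ := hpS
    have hp0pos : 0 < p 0 := hppos 0
    have hp1pos : 0 < p 1 := hppos 1
    have hp0a : p 0 < a := by
      rcases eq_or_lt_of_le hp0m.2 with he | hlt
      · exfalso; rw [hp1e, he, hαa] at hp1pos; exact lt_irrefl 0 hp1pos
      · exact hlt
    have hcomp0p : ∀ ε : ℝ, f (p + ε • (Pi.single 0 1 : Fin 2 → ℝ)) = F2 (p 0 + ε) (p 1) := by
      intro ε; rw [hfF]
      simp [Pi.single_eq_of_ne hne10]
    have hcomp0m : ∀ ε : ℝ, f (p - ε • (Pi.single 0 1 : Fin 2 → ℝ)) = F2 (p 0 - ε) (p 1) := by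
      intro ε; rw [hfF]
      simp [Pi.single_eq_of_ne hne10]
    have hcomp1p : ∀ ε : ℝ, f (p + ε • (Pi.single 1 1 : Fin 2 → ℝ)) = F2 (p 0) (p 1 + ε) := by
      intro ε; rw [hfF]
      simp [Pi.single_eq_of_ne hne01]
    have hcomp1m : ∀ ε : ℝ, f (p - ε • (Pi.single 1 1 : Fin 2 → ℝ)) = F2 (p 0) (p 1 - ε) := by
      intro ε; rw [hfF]
      simp [Pi.single_eq_of_ne hne01]
    fin_cases i
    · simp only [Fin.mk_zero, Fin.isValue] at hdm hdp
      rcases le_or_gt (p 0) tx with hcase | hcase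
      · have hp1ty : ty ≤ p 1 := by
          rw [hp1e, hty]; exact hαle (p 0) tx hp0m htx hcase
        have hv0 : F2 (p 0) (p 1) = C := by
          rw [heY _ _ hp0pos.le hp1ty, min_eq_left hcase, hp1e]
          simp
        have hdp' : Tendsto (fun ε : ℝ => (f (p + ε • (Pi.single 0 1 : Fin 2 → ℝ)) - f p) / ε)
            (𝓝[>] (0:ℝ)) (𝓝 0) := by
          refine Tendsto.congr' ?_ tendsto_const_nhds
          filter_upwards [Ioo_mem_nhdsGT_of_mem (⟨le_refl (0:ℝ), sub_pos.2 hp0a⟩ :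
            (0:ℝ) ∈ Ico (0:ℝ) (a - p 0))] with ε hε
          obtain ⟨hε0, hεa⟩ := hε
          have hv1 : F2 (p 0 + ε) (p 1) = C := by
            rw [heY _ _ (by linarith) hp1ty]
            have hmle : min (p 0 + ε) tx ∈ Icc (0:ℝ) a :=
              ⟨le_min (by linarith) htx0, (min_le_right _ _).trans htxa⟩
            have hα2 : α (min (p 0 + ε) tx) ≤ α (p 0) :=
              hαle (p 0) _ hp0m hmle (le_min (by linarith) hcase)
            rw [min_eq_right (by rw [hp1e]; linarith : (0:ℝ) ≤ p 1 - α (min (p 0 + ε) tx)),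
              add_zero]
          rw [hcomp0p, hfF p, hv0, hv1]
          simp
        have hdpv : dp = 0 := tendsto_nhds_unique hdp hdp'
        have hdm' : Tendsto (fun ε : ℝ => (f p - f (p - ε • (Pi.single 0 1 : Fin 2 → ℝ))) / ε)
            (𝓝[>] (0:ℝ)) (𝓝 (-α' (p 0))) := by
          have hbase : Tendsto (fun ε : ℝ => (α (p 0 - ε) - α (p 0)) / ε) (𝓝[>] (0:ℝ))
              (𝓝 (-α' (p 0))) := by
            have hneg := (leftLim (hαd (p 0) hp0m)).neg
            refine hneg.congr fun ε => ?_
            rw [← neg_div, neg_sub]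
          refine Tendsto.congr' ?_ hbase
          filter_upwards [Ioo_mem_nhdsGT_of_mem (⟨le_refl (0:ℝ), hp0pos⟩ :
            (0:ℝ) ∈ Ico (0:ℝ) (p 0))] with ε hε
          obtain ⟨hε0, hεp⟩ := hε
          have hm : p 0 - ε ∈ Icc (0:ℝ) a := ⟨by linarith, by linarith [hp0m.2]⟩
          have hlt2 : α (p 0) < α (p 0 - ε) := hanti hm hp0m (by linarith)
          have hv1 : F2 (p 0 - ε) (p 1) = C + (p 1 - α (p 0 - ε)) := by
            rw [heY _ _ (by linarith : (0:ℝ) ≤ p 0 - ε) hp1ty,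
              min_eq_left (by linarith : p 0 - ε ≤ tx),
              min_eq_left (by rw [hp1e]; linarith : p 1 - α (p 0 - ε) ≤ 0)]
          rw [hcomp0m, hfF p, hv0, hv1, hp1e]
          ring
        have hdmv : dm = -α' (p 0) := tendsto_nhds_unique hdm hdm'
        have hf1 := hα'le1 (p 0) hp0pos.le hcase
        rw [hdmv, hdpv]
        linarith
      · have hp1ty : p 1 < ty := by
          rw [hp1e, hty]; exact hanti htx hp0m hcase
        have hβp1 : β (p 1) = p 0 := by rw [hp1e, hβα _ hp0m]
        have hv0 : F2 (p 0) (p 1) = C := by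
          rw [he2 _ _ hcase.le hp1ty, hβp1, min_eq_right (le_refl _)]
          ring
        have hdp' : Tendsto (fun ε : ℝ => (f (p + ε • (Pi.single 0 1 : Fin 2 → ℝ)) - f p) / ε)
            (𝓝[>] (0:ℝ)) (𝓝 0) := by
          refine Tendsto.congr' ?_ tendsto_const_nhds
          filter_upwards [self_mem_nhdsWithin] with ε hε
          have hε0 : (0:ℝ) < ε := hε
          have hv1 : F2 (p 0 + ε) (p 1) = C := by
            rw [he2 _ _ (by linarith : tx ≤ p 0 + ε) hp1ty, hβp1,
              min_eq_right (by linarith)]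
            ring
          rw [hcomp0p, hfF p, hv0, hv1]
          simp
        have hdpv : dp = 0 := tendsto_nhds_unique hdp hdp'
        have hdm' : Tendsto (fun ε : ℝ => (f p - f (p - ε • (Pi.single 0 1 : Fin 2 → ℝ))) / ε)
            (𝓝[>] (0:ℝ)) (𝓝 1) := by
          refine Tendsto.congr' ?_ tendsto_const_nhds
          filter_upwards [Ioo_mem_nhdsGT_of_mem (⟨le_refl (0:ℝ), sub_pos.2 hcase⟩ :
            (0:ℝ) ∈ Ico (0:ℝ) (p 0 - tx))] with ε hε
          obtain ⟨hε0, hεlt⟩ := hε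
          have hv1 : F2 (p 0 - ε) (p 1) = C - ε := by
            rw [he2 _ _ (by linarith : tx ≤ p 0 - ε) hp1ty, hβp1,
              min_eq_left (by linarith)]
            ring
          rw [hcomp0m, hfF p, hv0, hv1]
          rw [show C - (C - ε) = ε by ring]
          exact (div_self (ne_of_gt hε0)).symm
        have hdmv : dm = 1 := tendsto_nhds_unique hdm hdm'
        rw [hdmv, hdpv]
        norm_num
    · simp only [Fin.mk_one, Fin.isValue] at hdm hdp
      rcases lt_trichotomy (p 0) tx with hcase | hcase | hcase
      · have hp1ty : ty < p 1 := by rw [hp1e]; exact hαlt _ hp0pos.le hcase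
        have hv0 : F2 (p 0) (p 1) = C := by
          rw [he3 _ _ hcase hp1ty.le, hp1e, min_self]
          ring
        have hdp' : Tendsto (fun ε : ℝ => (f (p + ε • (Pi.single 1 1 : Fin 2 → ℝ)) - f p) / ε)
            (𝓝[>] (0:ℝ)) (𝓝 0) := by
          refine Tendsto.congr' ?_ tendsto_const_nhds
          filter_upwards [self_mem_nhdsWithin] with ε hε
          have hε0 : (0:ℝ) < ε := hε
          have hv1 : F2 (p 0) (p 1 + ε) = C := by
            rw [he3 _ _ hcase (by linarith [hp1ty.le] : ty ≤ p 1 + ε), hp1e,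
              min_eq_right (by linarith : α (p 0) ≤ α (p 0) + ε)]
            ring
          rw [hcomp1p, hfF p, hv0, hv1]
          simp
        have hdpv : dp = 0 := tendsto_nhds_unique hdp hdp'
        have hdm' : Tendsto (fun ε : ℝ => (f p - f (p - ε • (Pi.single 1 1 : Fin 2 → ℝ))) / ε)
            (𝓝[>] (0:ℝ)) (𝓝 1) := by
          refine Tendsto.congr' ?_ tendsto_const_nhds
          filter_upwards [Ioo_mem_nhdsGT_of_mem (⟨le_refl (0:ℝ), sub_pos.2 hp1ty⟩ :
            (0:ℝ) ∈ Ico (0:ℝ) (p 1 - ty))] with ε hε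
          obtain ⟨hε0, hεlt⟩ := hε
          have hv1 : F2 (p 0) (p 1 - ε) = C - ε := by
            rw [he3 _ _ hcase (by linarith : ty ≤ p 1 - ε), hp1e,
              min_eq_left (by linarith : α (p 0) - ε ≤ α (p 0))]
            ring
          rw [hcomp1m, hfF p, hv0, hv1]
          rw [show C - (C - ε) = ε by ring]
          exact (div_self (ne_of_gt hε0)).symm
        have hdmv : dm = 1 := tendsto_nhds_unique hdm hdm'
        rw [hdmv, hdpv]
        norm_num
      · have hp1ty : p 1 = ty := by rw [hp1e, hcase, hty]
        have hv0 : F2 (p 0) (p 1) = C := he1 _ _ hcase.ge hp1ty.ge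
        have hdp' : Tendsto (fun ε : ℝ => (f (p + ε • (Pi.single 1 1 : Fin 2 → ℝ)) - f p) / ε)
            (𝓝[>] (0:ℝ)) (𝓝 0) := by
          refine Tendsto.congr' ?_ tendsto_const_nhds
          filter_upwards [self_mem_nhdsWithin] with ε hε
          have hε0 : (0:ℝ) < ε := hε
          have hv1 : F2 (p 0) (p 1 + ε) = C := he1 _ _ hcase.ge (by linarith [hp1ty.ge])
          rw [hcomp1p, hfF p, hv0, hv1]
          simp
        have hdpv : dp = 0 := tendsto_nhds_unique hdp hdp'
        have hdm' : Tendsto (fun ε : ℝ => (f p - f (p - ε • (Pi.single 1 1 : Fin 2 → ℝ))) / ε)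
            (𝓝[>] (0:ℝ)) (𝓝 (-β' ty)) := by
          have hbase : Tendsto (fun ε : ℝ => (β (ty - ε) - β ty) / ε) (𝓝[>] (0:ℝ))
              (𝓝 (-β' ty)) := by
            have hneg := (leftLim (hβd ty htyb)).neg
            refine hneg.congr fun ε => ?_
            rw [← neg_div, neg_sub]
          refine Tendsto.congr' ?_ hbase
          filter_upwards [Ioo_mem_nhdsGT_of_mem (⟨le_refl (0:ℝ), hp1ty ▸ hp1pos⟩ :
            (0:ℝ) ∈ Ico (0:ℝ) ty)] with ε hε
          obtain ⟨hε0, hεty⟩ := hε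
          have hβgt : tx < β (p 1 - ε) :=
            hβlt _ (by rw [hp1ty]; linarith) (by rw [hp1ty]; linarith)
          have hv1 : F2 (p 0) (p 1 - ε) = C + (tx - β (p 1 - ε)) := by
            rw [he2 _ _ hcase.ge (by rw [hp1ty]; linarith : p 1 - ε < ty), hcase,
              min_eq_left hβgt.le]
          rw [hcomp1m, hfF p, hv0, hv1, hp1ty, ← hβty]
          ring
        have hdmv : dm = -β' ty := tendsto_nhds_unique hdm hdm'
        have hβ'ty : β' ty = -1 := by
          have h := hβ'eq ty htyb
          rw [hβty, hT] at h
          linarith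
        rw [hdmv, hdpv, hβ'ty]
        norm_num
      · have hp1ty : p 1 < ty := by
          rw [hp1e, hty]; exact hanti htx hp0m hcase
        have hβp1 : β (p 1) = p 0 := by rw [hp1e, hβα _ hp0m]
        have hp1b : p 1 ∈ Icc (0:ℝ) b := ⟨hp1pos.le, hp1ty.le.trans hty_le_b⟩
        have hv0 : F2 (p 0) (p 1) = C := by
          rw [he2 _ _ hcase.le hp1ty, hβp1, min_eq_right (le_refl _)]
          ring
        have hdp' : Tendsto (fun ε : ℝ => (f (p + ε • (Pi.single 1 1 : Fin 2 → ℝ)) - f p) / ε)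
            (𝓝[>] (0:ℝ)) (𝓝 0) := by
          refine Tendsto.congr' ?_ tendsto_const_nhds
          filter_upwards [Ioo_mem_nhdsGT_of_mem (⟨le_refl (0:ℝ), sub_pos.2 hp1ty⟩ :
            (0:ℝ) ∈ Ico (0:ℝ) (ty - p 1))] with ε hε
          obtain ⟨hε0, hεlt⟩ := hε
          have hmem : p 1 + ε ∈ Icc (0:ℝ) b := ⟨by linarith, by linarith [hty_le_b]⟩
          have hββ : β (p 1 + ε) ≤ p 0 := by
            rw [← hβp1]; exact hβle _ _ hp1b hmem (by linarith)
          have hv1 : F2 (p 0) (p 1 + ε) = C := by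
            rw [he2 _ _ hcase.le (by linarith), min_eq_right hββ]
            ring
          rw [hcomp1p, hfF p, hv0, hv1]
          simp
        have hdpv : dp = 0 := tendsto_nhds_unique hdp hdp'
        have hdm' : Tendsto (fun ε : ℝ => (f p - f (p - ε • (Pi.single 1 1 : Fin 2 → ℝ))) / ε)
            (𝓝[>] (0:ℝ)) (𝓝 (-β' (p 1))) := by
          have hbase : Tendsto (fun ε : ℝ => (β (p 1 - ε) - β (p 1)) / ε) (𝓝[>] (0:ℝ))
              (𝓝 (-β' (p 1))) := by
            have hneg := (leftLim (hβd (p 1) hp1b)).neg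
            refine hneg.congr fun ε => ?_
            rw [← neg_div, neg_sub]
          refine Tendsto.congr' ?_ hbase
          filter_upwards [Ioo_mem_nhdsGT_of_mem (⟨le_refl (0:ℝ), hp1pos⟩ :
            (0:ℝ) ∈ Ico (0:ℝ) (p 1))] with ε hε
          obtain ⟨hε0, hεlt⟩ := hε
          have hmem : p 1 - ε ∈ Icc (0:ℝ) b := ⟨by linarith, by linarith [hp1b.2]⟩
          have hββ : p 0 ≤ β (p 1 - ε) := by
            rw [← hβp1]; exact (hβanti _ _ hmem hp1b (by linarith)).le
          have hv1 : F2 (p 0) (p 1 - ε) = C + (p 0 - β (p 1 - ε)) := by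
            rw [he2 _ _ hcase.le (by linarith : p 1 - ε < ty), min_eq_left hββ]
          rw [hcomp1m, hfF p, hv0, hv1, hβp1]
          ring
        have hdmv : dm = -β' (p 1) := tendsto_nhds_unique hdm hdm'
        have hβb1 := hβ'le1 (p 1) hp1pos.le hp1ty.le
        rw [hdmv, hdpv]
        linarith
  · refine ⟨-α' 0, -β' 0, ?_, ?_, rfl⟩
    · unfold HasRightPD
      have hf0 : f 0 = 0 := by
        rw [hfF]
        simpa using hF00
      have hcomp : ∀ ε : ℝ, f ((0:Fin 2 → ℝ) + ε • (Pi.single 0 1 : Fin 2 → ℝ)) = F2 ε 0 := by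
        intro ε; rw [hfF]
        simp [Pi.single_eq_of_ne hne10]
      rcases lt_or_ge 0 tx with hcase | hcase
      · have hbase : Tendsto (fun ε : ℝ => (α 0 - α (0 + ε)) / ε) (𝓝[>] (0:ℝ)) (𝓝 (-α' 0)) := by
          have hneg := (rightLim (hαd 0 h0a)).neg
          refine hneg.congr fun ε => ?_
          rw [← neg_div, neg_sub]
        refine Tendsto.congr' ?_ hbase
        filter_upwards [Ioo_mem_nhdsGT_of_mem (⟨le_refl (0:ℝ), hcase⟩ :
          (0:ℝ) ∈ Ico (0:ℝ) tx)] with ε hε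
        obtain ⟨hε0, hεtx⟩ := hε
        have hεa : ε < a := lt_of_lt_of_le hεtx htxa
        have hval : F2 ε 0 = b - α ε := by
          rcases lt_or_ge 0 ty with h2 | h2
          · rw [he4 _ _ hεtx h2, hβ0]; ring
          · have hty0 : ty = 0 := le_antisymm h2 hty_nonneg
            have hαε : 0 ≤ α ε := by
              rw [← hαa]; exact hαle ε a ⟨hε0.le, hεa.le⟩ haa hεa.le
            have htxa' : tx = a := hanti.injOn htx haa (by rw [← hty, hty0, hαa])
            rw [he3 _ _ hεtx (le_of_eq hty0), min_eq_left hαε, hC, hty0, htxa']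
            ring
        rw [hcomp, hf0, hval, zero_add, hα0, sub_zero]
      · have htx0' : tx = 0 := le_antisymm hcase htx0
        have hty0 : ty = b := by rw [hty, htx0', hα0]
        have hα'0 : -α' 0 = 1 := by
          have h := hT
          rw [htx0'] at h
          rw [h]; norm_num
        rw [hα'0]
        refine Tendsto.congr' ?_ tendsto_const_nhds
        filter_upwards [Ioo_mem_nhdsGT_of_mem (⟨le_refl (0:ℝ), ha⟩ :
          (0:ℝ) ∈ Ico (0:ℝ) a)] with ε hε
        obtain ⟨hε0, hεa⟩ := hε
        have hval : F2 ε 0 = ε := by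
          rw [he2 _ _ (by rw [htx0']; exact hε0.le : tx ≤ ε) (by rw [hty0]; exact hb), hβ0,
            min_eq_left hεa.le, hC, htx0', hty0]
          ring
        rw [hcomp, hf0, hval, sub_zero]
        exact (div_self (ne_of_gt hε0)).symm
    · unfold HasRightPD
      have hf0 : f 0 = 0 := by
        rw [hfF]
        simpa using hF00
      have hcomp : ∀ ε : ℝ, f ((0:Fin 2 → ℝ) + ε • (Pi.single 1 1 : Fin 2 → ℝ)) = F2 0 ε := by
        intro ε; rw [hfF]
        simp [Pi.single_eq_of_ne hne01]
      rcases lt_or_ge 0 ty with hcase | hcase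
      · have hbase : Tendsto (fun ε : ℝ => (β 0 - β (0 + ε)) / ε) (𝓝[>] (0:ℝ)) (𝓝 (-β' 0)) := by
          have hneg := (rightLim (hβd 0 h0b)).neg
          refine hneg.congr fun ε => ?_
          rw [← neg_div, neg_sub]
        refine Tendsto.congr' ?_ hbase
        filter_upwards [Ioo_mem_nhdsGT_of_mem (⟨le_refl (0:ℝ), hcase⟩ :
          (0:ℝ) ∈ Ico (0:ℝ) ty)] with ε hε
        obtain ⟨hε0, hεty⟩ := hε
        have hεb : ε < b := lt_of_lt_of_le hεty hty_le_b
        have hval : F2 0 ε = a - β ε := by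
          rcases lt_or_ge 0 tx with h2 | h2
          · rw [he4 _ _ h2 hεty, hα0]; ring
          · have htx0' : tx = 0 := le_antisymm h2 htx0
            have hty0 : ty = b := by rw [hty, htx0', hα0]
            have hβε : 0 ≤ β ε := (hβval ε ⟨hε0.le, hεb.le⟩).1.1
            rw [he2 _ _ (le_of_eq htx0') hεty, min_eq_left hβε, hC, htx0', hty0]
            ring
        rw [hcomp, hf0, hval, zero_add, hβ0, sub_zero]
      · have hty0' : ty = 0 := le_antisymm hcase hty_nonneg
        have htxa' : tx = a := hanti.injOn htx haa (by rw [← hty, hty0', hαa])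
        have hβ'0 : -β' 0 = 1 := by
          have h := hβ'eq 0 h0b
          rw [hβ0] at h
          have h2 := hT
          rw [htxa'] at h2
          rw [h2] at h
          linarith
        rw [hβ'0]
        refine Tendsto.congr' ?_ tendsto_const_nhds
        filter_upwards [Ioo_mem_nhdsGT_of_mem (⟨le_refl (0:ℝ), hb⟩ :
          (0:ℝ) ∈ Ico (0:ℝ) b)] with ε hε
        obtain ⟨hε0, hεb⟩ := hε
        have hval : F2 0 ε = ε := by
          rw [he3 _ _ (by rw [htxa']; exact ha) (by rw [hty0']; exact hε0.le), hα0,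
            min_eq_left hεb.le, hC, htxa', hty0']
          ring
        rw [hcomp, hf0, hval, sub_zero]
        exact (div_self (ne_of_gt hε0)).symm
end

section
/- Suppose for an s-surface S contained in the box B = {x ∈ O^n : x ≤ a} there exists a sequence of S-feasible EL functions f_k with cost(f_k) < M for all k and cost(f_k) → c, the infimum of costs of S-feasible functions. Then there exists an S-feasible EL function g with cost(g) ≤ c (so the infimum is attained). -/
open Filter Topology Set

lemma threeSlope (φ : ℝ → ℝ)
    (hmono : ∀ s t : ℝ, 0 ≤ s → s ≤ t → φ s ≤ φ t)
    (hDR : ∀ t t' ε : ℝ, 0 ≤ t → t ≤ t' → 0 < ε → φ (t' + ε) - φ t' ≤ φ (t + ε) - φ t)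
    {s t u : ℝ} (hs : 0 ≤ s) (hst : s < t) (htu : t < u) :
    (φ u - φ t) / (u - t) ≤ (φ t - φ s) / (t - s) := by
  have hts : 0 < t - s := by linarith
  have hut : 0 < u - t := by linarith
  set C := (φ t - φ s) / (t - s) with hCdef
  have hC0 : 0 ≤ C := div_nonneg (by linarith [hmono s t hs hst.le]) hts.le
  have key : φ u - φ t ≤ C * (u - t) := by
    apply le_of_forall_pos_le_add
    intro η hη
    obtain ⟨q, hq⟩ := exists_nat_gt ((t - s) * (C + 1) / η)
    have hqpos : 0 < (q : ℝ) := lt_of_le_of_lt (by positivity) hq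
    set δ := (t - s) / q with hδdef
    have hδ : 0 < δ := div_pos hts hqpos
    have h1 : (t - s) * (C + 1) < q * η := (div_lt_iff₀ hη).1 hq
    have hδη : (C + 1) * δ < η := by
      rw [hδdef, mul_div_assoc']
      exact (div_lt_iff₀ hqpos).2 (by nlinarith)
    have hsq : s + q * δ = t := by rw [hδdef]; field_simp; ring
    have claim_each : ∀ a : ℝ, t ≤ a → (q : ℝ) * (φ (a + δ) - φ a) ≤ φ t - φ s := by
      intro a ha
      have each : ∀ j ∈ Finset.range q,
          φ (a + δ) - φ a ≤ φ (s + (j : ℝ) * δ + δ) - φ (s + (j : ℝ) * δ) := by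
        intro j hj
        apply hDR (s + (j : ℝ) * δ) a δ (by positivity) _ hδ
        have hjq : (j : ℝ) ≤ (q : ℝ) := by exact_mod_cast (Finset.mem_range.1 hj).le
        nlinarith
      have tel : ∑ j ∈ Finset.range q, (φ (s + (j : ℝ) * δ + δ) - φ (s + (j : ℝ) * δ))
          = φ t - φ s := by
        calc ∑ j ∈ Finset.range q, (φ (s + (j : ℝ) * δ + δ) - φ (s + (j : ℝ) * δ))
            = ∑ j ∈ Finset.range q,
              ((fun m : ℕ => φ (s + (m : ℝ) * δ)) (j + 1) - (fun m : ℕ => φ (s + (m : ℝ) * δ)) j) :=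
              Finset.sum_congr rfl (fun j _ => by
                congr 1
                exact congrArg φ (by push_cast; ring))
          _ = φ (s + ((q:ℕ) : ℝ) * δ) - φ (s + ((0:ℕ) : ℝ) * δ) :=
              Finset.sum_range_sub (fun m : ℕ => φ (s + (m : ℝ) * δ)) q
          _ = φ t - φ s := by rw [hsq]; norm_num
      calc (q : ℝ) * (φ (a + δ) - φ a)
          = ∑ _j ∈ Finset.range q, (φ (a + δ) - φ a) := by
            rw [Finset.sum_const, Finset.card_range, nsmul_eq_mul]
        _ ≤ _ := Finset.sum_le_sum each
        _ = φ t - φ s := tel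
    have hCδ : (q : ℝ) * (C * δ) = φ t - φ s := by
      rw [hCdef, hδdef]
      field_simp
    have claim_right : ∀ p : ℕ, φ (t + (p : ℝ) * δ) - φ t ≤ (p : ℝ) * (C * δ) := by
      intro p
      induction p with
      | zero => simp
      | succ p ih =>
        have hta : t ≤ t + (p : ℝ) * δ := by nlinarith
        have h := claim_each (t + (p : ℝ) * δ) hta
        have step : φ (t + (p : ℝ) * δ + δ) - φ (t + (p : ℝ) * δ) ≤ C * δ := by nlinarith
        have harg : t + ((p : ℕ) + 1 : ℝ) * δ = t + (p : ℝ) * δ + δ := by push_cast; ring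
        push_cast
        rw [show t + ((p : ℝ) + 1) * δ = t + (p : ℝ) * δ + δ from by ring]
        linarith
    set p := ⌈(u - t) / δ⌉₊ with hpdef
    have hp1 : (u - t) / δ ≤ (p : ℝ) := Nat.le_ceil _
    have hp2 : (p : ℝ) < (u - t) / δ + 1 := Nat.ceil_lt_add_one (by positivity)
    have hup : u ≤ t + (p : ℝ) * δ := by
      rw [div_le_iff₀ hδ] at hp1; linarith
    have hmon2 : φ u ≤ φ (t + (p : ℝ) * δ) := hmono u _ (by linarith) hup
    have h3 := claim_right p
    have hpd : (p : ℝ) * δ < (u - t) + δ := by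
      have : (p : ℝ) * δ < ((u - t) / δ + 1) * δ := mul_lt_mul_of_pos_right hp2 hδ
      calc (p : ℝ) * δ < ((u - t) / δ + 1) * δ := this
        _ = u - t + δ := by field_simp
    have hmul : C * ((p : ℝ) * δ) ≤ C * ((u - t) + δ) :=
      mul_le_mul_of_nonneg_left hpd.le hC0
    nlinarith
  rw [div_le_iff₀ hut]
  linarith [key]

lemma concOf (φ : ℝ → ℝ)
    (hmono : ∀ s t : ℝ, 0 ≤ s → s ≤ t → φ s ≤ φ t)
    (hDR : ∀ t t' ε : ℝ, 0 ≤ t → t ≤ t' → 0 < ε → φ (t' + ε) - φ t' ≤ φ (t + ε) - φ t) :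
    ConcaveOn ℝ (Ici 0) φ :=
  concaveOn_of_slope_anti_adjacent (convex_Ici 0)
    (fun hx _ hxy hyz => threeSlope φ hmono hDR hx hxy hyz)

/-- secant slopes through a point are antitone for concave functions on `Ici 0`. -/
lemma secant_anti {φ : ℝ → ℝ} (hφ : ConcaveOn ℝ (Ici 0) φ) {a x y : ℝ}
    (ha : 0 ≤ a) (hx : 0 ≤ x) (hy : 0 ≤ y) (hxa : x ≠ a) (hya : y ≠ a) (hxy : x ≤ y) :
    (φ y - φ a) / (y - a) ≤ (φ x - φ a) / (x - a) := by
  have h := hφ.neg.secant_mono ha hx hy hxa hya hxy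
  simp only [Pi.neg_apply] at h
  have hx' : (-φ x - -φ a) / (x - a) = -((φ x - φ a) / (x - a)) := by rw [← neg_div]; ring_nf
  have hy' : (-φ y - -φ a) / (y - a) = -((φ y - φ a) / (y - a)) := by rw [← neg_div]; ring_nf
  rw [hx', hy'] at h
  linarith

/-- existence of the left partial derivative (in 1-d form) at an interior point. -/
lemma leftD (φ : ℝ → ℝ)
    (hmono : ∀ s t : ℝ, 0 ≤ s → s ≤ t → φ s ≤ φ t)
    (hDR : ∀ t t' ε : ℝ, 0 ≤ t → t ≤ t' → 0 < ε → φ (t' + ε) - φ t' ≤ φ (t + ε) - φ t)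
    {t : ℝ} (ht : 0 < t) :
    ∃ dm : ℝ, Tendsto (fun ε : ℝ => (φ t - φ (t - ε)) / ε) (𝓝[>] 0) (𝓝 dm) ∧
      ∀ ε, 0 < ε → ε < t → dm ≤ (φ t - φ (t - ε)) / ε := by
  have hφ := concOf φ hmono hDR
  set L : ℝ → ℝ := fun ε => (φ t - φ (t - ε)) / ε with hL
  have hslope : ∀ ε : ℝ, ε ≠ 0 → L ε = (φ (t - ε) - φ t) / ((t - ε) - t) := by
    intro ε hε
    rw [hL]
    simp only
    rw [show (t - ε) - t = -ε by ring, div_neg, ← neg_div]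
    ring_nf
  have hmonoL : MonotoneOn L (Ioo 0 t) := by
    intro ε1 h1 ε2 h2 h12
    rw [hslope ε1 (ne_of_gt h1.1), hslope ε2 (ne_of_gt h2.1)]
    exact secant_anti hφ ht.le (by linarith [h2.2] : (0:ℝ) ≤ t - ε2)
      (by linarith [h1.2] : (0:ℝ) ≤ t - ε1)
      (by intro h; nlinarith [h2.1]) (by intro h; nlinarith [h1.1]) (by linarith)
  have hbdd : BddBelow (L '' Ioo 0 t) := by
    refine ⟨(φ (t + 1) - φ t) / ((t + 1) - t), ?_⟩
    rintro v ⟨ε, hε, rfl⟩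
    rw [hslope ε (ne_of_gt hε.1)]
    have := threeSlope φ hmono hDR (s := t - ε) (t := t) (u := t + 1)
      (by linarith [hε.2]) (by linarith [hε.1]) (by linarith)
    calc (φ (t+1) - φ t) / ((t+1) - t) ≤ (φ t - φ (t - ε)) / (t - (t - ε)) := this
      _ = (φ (t - ε) - φ t) / ((t - ε) - t) := by
          rw [show t - (t - ε) = ε by ring, show (t - ε) - t = -ε by ring, div_neg, ← neg_div]
          ring_nf
  refine ⟨sInf (L '' Ioo 0 t), ?_, ?_⟩
  · exact MonotoneOn.tendsto_nhdsWithin_Ioo_right ⟨t/2, by constructor <;> linarith⟩ hmonoL hbdd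
  · intro ε hε hεt
    exact csInf_le hbdd ⟨ε, ⟨hε, hεt⟩, rfl⟩

/-- existence of the right partial derivative (in 1-d form), given an upper slope bound. -/
lemma rightD (φ : ℝ → ℝ)
    (hmono : ∀ s t : ℝ, 0 ≤ s → s ≤ t → φ s ≤ φ t)
    (hDR : ∀ t t' ε : ℝ, 0 ≤ t → t ≤ t' → 0 < ε → φ (t' + ε) - φ t' ≤ φ (t + ε) - φ t)
    {t : ℝ} (ht : 0 ≤ t) {B : ℝ} (hB : ∀ ε : ℝ, 0 < ε → (φ (t + ε) - φ t) / ε ≤ B) :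
    ∃ dp : ℝ, Tendsto (fun ε : ℝ => (φ (t + ε) - φ t) / ε) (𝓝[>] 0) (𝓝 dp) ∧
      (∀ ε, 0 < ε → (φ (t + ε) - φ t) / ε ≤ dp) ∧ dp ≤ B := by
  have hφ := concOf φ hmono hDR
  set R : ℝ → ℝ := fun ε => (φ (t + ε) - φ t) / ε with hR
  have hslope : ∀ ε : ℝ, R ε = (φ (t + ε) - φ t) / ((t + ε) - t) := by
    intro ε; rw [hR]; simp only; rw [show (t + ε) - t = ε by ring]
  have hantiR : AntitoneOn R (Ioi 0) := by
    intro ε1 h1 ε2 h2 h12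
    rw [hslope ε1, hslope ε2]
    exact secant_anti hφ ht (by linarith [mem_Ioi.1 h1] : (0:ℝ) ≤ t + ε1)
      (by linarith [mem_Ioi.1 h2] : (0:ℝ) ≤ t + ε2)
      (by intro h; nlinarith [mem_Ioi.1 h1]) (by intro h; nlinarith [mem_Ioi.1 h2]) (by linarith)
  have hbdd : BddAbove (R '' Ioi 0) := by
    refine ⟨B, ?_⟩
    rintro v ⟨ε, hε, rfl⟩
    exact hB ε hε
  refine ⟨sSup (R '' Ioi 0), ?_, ?_, ?_⟩
  · exact AntitoneOn.tendsto_nhdsGT hantiR hbdd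
  · intro ε hε
    exact le_csSup hbdd ⟨ε, hε, rfl⟩
  · exact csSup_le (⟨R 1, 1, by norm_num, rfl⟩) (by rintro v ⟨ε, hε, rfl⟩; exact hB ε hε)

section bridges
variable {n : ℕ}

lemma P_nonneg (i : Fin n) : (0 : Fin n → ℝ) ≤ Pi.single i 1 := by
  intro j
  rcases eq_or_ne j i with h | h <;> simp [Pi.single_apply, h]

lemma bridge_mono (f : (Fin n → ℝ) → ℝ) (hf : IsEL n f) (y : Fin n → ℝ) (hy : 0 ≤ y) (i : Fin n) :
    ∀ s t : ℝ, 0 ≤ s → s ≤ t →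
      f (y + s • (Pi.single i 1 : Fin n → ℝ)) ≤ f (y + t • (Pi.single i 1 : Fin n → ℝ)) := by
  intro s t hs hst
  apply hf.2.2.1
  · intro j
    exact add_nonneg (hy j) (mul_nonneg hs (P_nonneg i j))
  · intro j
    exact add_le_add_right (mul_le_mul_of_nonneg_right hst (P_nonneg i j)) _

lemma bridge_comb (y : Fin n → ℝ) (i : Fin n) (a b : ℝ) :
    (y + a • (Pi.single i 1 : Fin n → ℝ)) + b • (Pi.single i 1 : Fin n → ℝ)
      = y + (a + b) • (Pi.single i 1 : Fin n → ℝ) := by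
  rw [add_assoc, ← add_smul]

lemma bridge_DR (f : (Fin n → ℝ) → ℝ) (hf : IsEL n f) (y : Fin n → ℝ) (hy : 0 ≤ y) (i : Fin n) :
    ∀ t t' ε : ℝ, 0 ≤ t → t ≤ t' → 0 < ε →
      f (y + (t' + ε) • (Pi.single i 1 : Fin n → ℝ)) - f (y + t' • (Pi.single i 1 : Fin n → ℝ)) ≤
        f (y + (t + ε) • (Pi.single i 1 : Fin n → ℝ)) - f (y + t • (Pi.single i 1 : Fin n → ℝ)) := by
  intro t t' ε h0 htt' hε
  rcases eq_or_lt_of_le htt' with rfl | hlt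
  · exact le_rfl
  have hx0 : 0 ≤ y + t • (Pi.single i 1 : Fin n → ℝ) := by
    intro j; exact add_nonneg (hy j) (mul_nonneg h0 (P_nonneg i j))
  have h := hf.2.2.2 (y + t • (Pi.single i 1 : Fin n → ℝ)) i (t' - t) ε hx0 (by linarith) hε
  have e2 : (y + t • (Pi.single i 1 : Fin n → ℝ)) + (t' - t) • (Pi.single i 1 : Fin n → ℝ)
      = y + t' • (Pi.single i 1 : Fin n → ℝ) := by
    rw [bridge_comb]
    exact congrArg (fun r : ℝ => y + r • (Pi.single i 1 : Fin n → ℝ)) (by ring)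
  have e1 : ((y + t • (Pi.single i 1 : Fin n → ℝ)) + (t' - t) • (Pi.single i 1 : Fin n → ℝ))
      + ε • (Pi.single i 1 : Fin n → ℝ) = y + (t' + ε) • (Pi.single i 1 : Fin n → ℝ) := by
    rw [e2, bridge_comb]
  have e3 : (y + t • (Pi.single i 1 : Fin n → ℝ)) + ε • (Pi.single i 1 : Fin n → ℝ)
      = y + (t + ε) • (Pi.single i 1 : Fin n → ℝ) := bridge_comb y i t ε
  rw [e1, e2, e3] at h
  exact h

lemma el_deriv (f : (Fin n → ℝ) → ℝ) (hf : IsEL n f) (x : Fin n → ℝ) (hx : 0 ≤ x) (i : Fin n)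
    (ht : 0 < x i) :
    ∃ dm dp : ℝ, HasLeftPD n f i x dm ∧ HasRightPD n f i x dp ∧
      (∀ ε : ℝ, 0 < ε → ε < x i →
        dm ≤ (f x - f (x - ε • (Pi.single i 1 : Fin n → ℝ))) / ε) ∧
      (∀ ε : ℝ, 0 < ε → (f (x + ε • (Pi.single i 1 : Fin n → ℝ)) - f x) / ε ≤ dp) := by
  classical
  set y : Fin n → ℝ := x - x i • (Pi.single i 1 : Fin n → ℝ) with hydef
  have hy : 0 ≤ y := by
    intro j
    rcases eq_or_ne j i with h | h
    · subst h; simp [hydef, Pi.single_apply]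
    · simp [hydef, Pi.single_apply, h]
      exact hx j
  set φ : ℝ → ℝ := fun τ => f (y + τ • (Pi.single i 1 : Fin n → ℝ)) with hφdef
  have hmono := bridge_mono f hf y hy i
  have hDR := bridge_DR f hf y hy i
  have hyx : y + (x i) • (Pi.single i 1 : Fin n → ℝ) = x := by
    funext j
    simp [hydef, Pi.single_apply]
  have hminus : ∀ ε : ℝ, x - ε • (Pi.single i 1 : Fin n → ℝ)
      = y + (x i - ε) • (Pi.single i 1 : Fin n → ℝ) := by
    intro ε; funext j
    simp only [hydef, Pi.sub_apply, Pi.add_apply, Pi.smul_apply, smul_eq_mul]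
    ring
  have hplus : ∀ ε : ℝ, x + ε • (Pi.single i 1 : Fin n → ℝ)
      = y + (x i + ε) • (Pi.single i 1 : Fin n → ℝ) := by
    intro ε; funext j
    simp only [hydef, Pi.sub_apply, Pi.add_apply, Pi.smul_apply, smul_eq_mul]
    ring
  obtain ⟨dm, hdm, hdmle⟩ := leftD φ hmono hDR ht
  have hB : ∀ ε : ℝ, 0 < ε → (φ (x i + ε) - φ (x i)) / ε
      ≤ (φ (x i) - φ (x i / 2)) / (x i - x i / 2) := by
    intro ε hε
    have := threeSlope φ hmono hDR (s := x i / 2) (t := x i) (u := x i + ε)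
      (by linarith) (by linarith) (by linarith)
    rwa [show x i + ε - x i = ε from by ring] at this
  obtain ⟨dp, hdp, hdple, -⟩ := rightD φ hmono hDR ht.le hB
  have hfx : f x = φ (x i) := by rw [hφdef]; simp only; rw [hyx]
  refine ⟨dm, dp, ?_, ?_, ?_, ?_⟩
  · show Filter.Tendsto (fun ε : ℝ => (f x - f (x - ε • (Pi.single i 1 : Fin n → ℝ))) / ε) (𝓝[>] 0) (𝓝 dm)
    have : (fun ε : ℝ => (f x - f (x - ε • (Pi.single i 1 : Fin n → ℝ))) / ε)
        = fun ε : ℝ => (φ (x i) - φ (x i - ε)) / ε := by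
      funext ε
      rw [hfx, hminus ε]
    rw [this]
    exact hdm
  · show Filter.Tendsto (fun ε : ℝ => (f (x + ε • (Pi.single i 1 : Fin n → ℝ)) - f x) / ε) (𝓝[>] 0) (𝓝 dp)
    have : (fun ε : ℝ => (f (x + ε • (Pi.single i 1 : Fin n → ℝ)) - f x) / ε)
        = fun ε : ℝ => (φ (x i + ε) - φ (x i)) / ε := by
      funext ε
      rw [hfx, hplus ε]
    rw [this]
    exact hdp
  · intro ε hε hεt
    rw [hfx, hminus ε]
    exact hdmle ε hε hεt
  · intro ε hε
    rw [hfx, hplus ε]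
    exact hdple ε hε

lemma el_slope0_le (f : (Fin n → ℝ) → ℝ) (hf : IsEL n f) (i : Fin n) (D : ℝ)
    (hD : HasRightPD n f i 0 D) : ∀ t : ℝ, 0 ≤ t → f (t • (Pi.single i 1 : Fin n → ℝ)) ≤ D * t := by
  intro t htnn
  rcases eq_or_lt_of_le htnn with rfl | htpos
  · simp [hf.1]
  set φ : ℝ → ℝ := fun τ => f ((0 : Fin n → ℝ) + τ • (Pi.single i 1 : Fin n → ℝ)) with hφdef
  have hmono := bridge_mono f hf 0 le_rfl i
  have hDR := bridge_DR f hf 0 le_rfl i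
  have hφ0 : φ 0 = 0 := by
    rw [hφdef]; simp only; rw [zero_smul, add_zero, hf.1]
  have key : (φ t - φ 0) / t ≤ D := by
    refine ge_of_tendsto hD ?_
    filter_upwards [Ioo_mem_nhdsGT_of_mem (⟨le_rfl, htpos⟩ : (0:ℝ) ∈ Ico 0 t)] with ε hε
    have h := secant_anti (concOf φ hmono hDR) (a := 0) (x := ε) (y := t)
      le_rfl hε.1.le htnn (ne_of_gt hε.1) (ne_of_gt htpos) hε.2.le
    rw [sub_zero, sub_zero] at h
    calc (φ t - φ 0) / t ≤ (φ ε - φ 0) / ε := h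
      _ = (f (0 + ε • (Pi.single i 1 : Fin n → ℝ)) - f 0) / ε := by
          simp only [hφ0, hf.1, sub_zero]; rfl
  rw [hφ0, sub_zero] at key
  have : φ t ≤ D * t := by
    rw [div_le_iff₀ htpos] at key
    linarith [key]
  calc f (t • (Pi.single i 1 : Fin n → ℝ)) = φ t := by rw [hφdef]; simp only [zero_add]
    _ ≤ D * t := this

lemma el_bound (f : (Fin n → ℝ) → ℝ) (hf : IsEL n f) (D : Fin n → ℝ) (M : ℝ)
    (hDM : ∀ i, D i ≤ M) (hD : ∀ i, HasRightPD n f i 0 (D i)) :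
    ∀ x : Fin n → ℝ, 0 ≤ x → f x ≤ M * ∑ i, x i := by
  classical
  suffices h : ∀ s : Finset (Fin n), ∀ x : Fin n → ℝ, 0 ≤ x → (∀ i ∉ s, x i = 0) →
      f x ≤ M * ∑ i ∈ s, x i by
    intro x hx
    exact h Finset.univ x hx (fun i hi => absurd (Finset.mem_univ i) hi)
  intro s
  induction s using Finset.induction_on with
  | empty =>
    intro x hx hsupp
    have hx0 : x = 0 := funext fun i => hsupp i (Finset.notMem_empty i)
    rw [hx0, hf.1]
    simp
  | @insert a s ha ih =>
    intro x hx hsupp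
    set x' := Function.update x a 0 with hx'def
    have hx'0 : 0 ≤ x' := by
      intro j
      rw [hx'def, Function.update_apply]
      split
      · exact le_rfl
      · exact hx j
    have hsupp' : ∀ i ∉ s, x' i = 0 := by
      intro j hj
      rw [hx'def, Function.update_apply]
      split
      · rfl
      · next h => exact hsupp j (by simp [Finset.mem_insert, h, hj])
    have hsub := hf.2.1 (x a • (Pi.single a 1 : Fin n → ℝ)) x'
      (fun j => mul_nonneg (hx a) (P_nonneg a j)) hx'0
    have hinf : (x a • (Pi.single a 1 : Fin n → ℝ)) ⊓ x' = 0 := by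
      funext j
      have hxj : (0:ℝ) ≤ x j := hx j
      rcases eq_or_ne j a with h | h
      · subst h
        simp [Pi.inf_apply, hx'def, Pi.single_apply, min_eq_right hxj, hxj]
      · simp [Pi.inf_apply, hx'def, Pi.single_apply, h,
          Function.update_apply, min_eq_left hxj, hxj]
    have hsupeq : (x a • (Pi.single a 1 : Fin n → ℝ)) ⊔ x' = x := by
      funext j
      have hxj : (0:ℝ) ≤ x j := hx j
      rcases eq_or_ne j a with h | h
      · subst h
        simp [Pi.sup_apply, hx'def, Pi.single_apply, max_eq_left hxj, hxj]
      · simp [Pi.sup_apply, hx'def, Pi.single_apply, h,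
          Function.update_apply, max_eq_right hxj, hxj]
    rw [hinf, hsupeq, hf.1] at hsub
    have h1 : f (x a • (Pi.single a 1 : Fin n → ℝ)) ≤ D a * x a :=
      el_slope0_le f hf a (D a) (hD a) (x a) (hx a)
    have h2 := ih x' hx'0 hsupp'
    have hsum : ∑ i ∈ s, x' i = ∑ i ∈ s, x i :=
      Finset.sum_congr rfl fun i hi => by
        rw [hx'def, Function.update_apply, if_neg (fun h : i = a => ha (h ▸ hi))]
    have h3 : D a * x a ≤ M * x a := mul_le_mul_of_nonneg_right (hDM a) (hx a)
    rw [Finset.sum_insert ha, mul_add]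
    rw [hsum] at h2
    linarith
end bridges

/-- if the infimum `c` of costs of S-feasible EL functions is
approached by a sequence of S-feasible EL functions of cost `< M`, then it is
attained: there is an S-feasible EL function of cost at most `c`. -/
theorem stmt_18 {n : ℕ} [NeZero n] (S : Set (Fin n → ℝ))
    (aa : Fin n → ℝ) (haa : 0 ≤ aa) (hSbox : ∀ x ∈ S, 0 ≤ x ∧ x ≤ aa)
    (F : ℕ → (Fin n → ℝ) → ℝ) (hF : ∀ k, IsEL n (F k))
    (hFfeas : ∀ k, SFeasible n (F k) S)
    (d : ℕ → Fin n → ℝ) (hd : ∀ k i, HasRightPD n (F k) i 0 (d k i))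
    (M c : ℝ)
    (hbound : ∀ k, Finset.univ.sup' Finset.univ_nonempty (d k) < M)
    (hcost : Filter.Tendsto
      (fun k => Finset.univ.sup' Finset.univ_nonempty (d k)) Filter.atTop (nhds c))
    (hinf : ∀ (g : (Fin n → ℝ) → ℝ) (e : Fin n → ℝ), IsEL n g → SFeasible n g S →
      (∀ i, HasRightPD n g i 0 (e i)) →
      c ≤ Finset.univ.sup' Finset.univ_nonempty e) :
    ∃ (g : (Fin n → ℝ) → ℝ) (e : Fin n → ℝ), IsEL n g ∧ SFeasible n g S ∧
      (∀ i, HasRightPD n g i 0 (e i)) ∧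
      Finset.univ.sup' Finset.univ_nonempty e ≤ c := by
  classical
  have hnM : ∀ k i, 0 ≤ d k i := by
    intro k i
    refine ge_of_tendsto (hd k i) ?_
    filter_upwards [self_mem_nhdsWithin] with ε hε
    have hε' : (0:ℝ) < ε := hε
    have h0 : (0 : Fin n → ℝ) ≤ 0 + ε • (Pi.single i 1 : Fin n → ℝ) :=
      fun j => add_nonneg le_rfl (mul_nonneg hε'.le (P_nonneg i j))
    have hmon := (hF k).2.2.1 0 (0 + ε • (Pi.single i 1 : Fin n → ℝ)) le_rfl h0
    have h1 : (0:ℝ) ≤ F k (0 + ε • (Pi.single i 1 : Fin n → ℝ)) - F k 0 := by linarith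
    exact div_nonneg h1 hε'.le
  have hdM : ∀ k i, d k i ≤ M := fun k i =>
    le_trans (Finset.le_sup' (d k) (Finset.mem_univ i)) (hbound k).le
  have hFub : ∀ k (x : Fin n → ℝ), 0 ≤ x → F k x ≤ M * ∑ i, x i :=
    fun k => el_bound (F k) (hF k) (d k) M (hdM k) (hd k)
  have hFlb : ∀ k (x : Fin n → ℝ), 0 ≤ x → 0 ≤ F k x := by
    intro k x hx
    have h := (hF k).2.2.1 0 x le_rfl hx
    rw [(hF k).1] at h
    exact h
  set U : Ultrafilter ℕ := Ultrafilter.of atTop with hUdef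
  have hUle : (U : Filter ℕ) ≤ atTop := Ultrafilter.of_le _
  have hlimex : ∀ (u : ℕ → ℝ) (a b : ℝ), (∀ k, u k ∈ Icc a b) →
      ∃ l, Tendsto u (U : Filter ℕ) (𝓝 l) := by
    intro u a b hu
    obtain ⟨l, -, hl⟩ := (isCompact_Icc (a := a) (b := b)).ultrafilter_le_nhds (U.map u)
      (by rw [le_principal_iff, Ultrafilter.coe_map]; exact mem_map.2 (univ_mem' hu))
    refine ⟨l, ?_⟩
    rwa [Ultrafilter.coe_map] at hl
  have hδex : ∀ i, ∃ l, Tendsto (fun k => d k i) (U : Filter ℕ) (𝓝 l) := fun i =>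
    hlimex _ 0 M (fun k => ⟨hnM k i, hdM k i⟩)
  choose δ hδ using hδex
  have hδc : ∀ i, δ i ≤ c := by
    intro i
    have h2 : Tendsto (fun k => Finset.univ.sup' Finset.univ_nonempty (d k)) (U : Filter ℕ)
        (𝓝 c) := hcost.mono_left hUle
    exact le_of_tendsto_of_tendsto' (hδ i) h2 (fun k => Finset.le_sup' (d k) (Finset.mem_univ i))
  set g : (Fin n → ℝ) → ℝ := fun x => limUnder (U : Filter ℕ) (fun k => F k (x ⊔ 0)) with hgdef
  have hg : ∀ x : Fin n → ℝ, 0 ≤ x → Tendsto (fun k => F k x) (U : Filter ℕ) (𝓝 (g x)) := by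
    intro x hx
    have hsupx : x ⊔ 0 = x := sup_eq_left.2 hx
    have hfun : (fun k => F k x) = fun k => F k (x ⊔ 0) :=
      funext fun k => congrArg (F k) hsupx.symm
    have hex : ∃ l, Tendsto (fun k => F k (x ⊔ 0)) (U : Filter ℕ) (𝓝 l) := by
      rw [← hfun]
      exact hlimex _ 0 (M * ∑ i, x i) (fun k => ⟨hFlb k x hx, hFub k x hx⟩)
    have hgx : g x = limUnder (U : Filter ℕ) (fun k => F k (x ⊔ 0)) := rfl
    rw [hgx, hfun]
    exact tendsto_nhds_limUnder hex
  have hg0 : g 0 = 0 := by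
    have h1 := hg 0 le_rfl
    have h2 : Tendsto (fun k => F k 0) (U : Filter ℕ) (𝓝 0) := by
      have he : (fun k => F k 0) = fun _ : ℕ => (0:ℝ) := funext fun k => (hF k).1
      rw [he]; exact tendsto_const_nhds
    exact tendsto_nhds_unique h1 h2
  have hgEL : IsEL n g := by
    refine ⟨hg0, ?_, ?_, ?_⟩
    · intro x y hx hy
      have hxy1 : (0:Fin n → ℝ) ≤ x ⊓ y := le_inf hx hy
      have hxy2 : (0:Fin n → ℝ) ≤ x ⊔ y := le_trans hx le_sup_left
      exact le_of_tendsto_of_tendsto' ((hg _ hxy1).add (hg _ hxy2)) ((hg x hx).add (hg y hy))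
        (fun k => (hF k).2.1 x y hx hy)
    · intro x y hx hxy
      exact le_of_tendsto_of_tendsto' (hg x hx) (hg y (le_trans hx hxy))
        (fun k => (hF k).2.2.1 x y hx hxy)
    · intro x i lam eps hx hlam heps
      have h1 : (0:Fin n → ℝ) ≤ x + lam • (Pi.single i 1 : Fin n → ℝ) :=
        fun j => add_nonneg (hx j) (mul_nonneg hlam.le (P_nonneg i j))
      have h2 : (0:Fin n → ℝ) ≤ (x + lam • (Pi.single i 1 : Fin n → ℝ)) + eps • (Pi.single i 1 : Fin n → ℝ) :=
        fun j => add_nonneg (h1 j) (mul_nonneg heps.le (P_nonneg i j))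
      have h3 : (0:Fin n → ℝ) ≤ x + eps • (Pi.single i 1 : Fin n → ℝ) :=
        fun j => add_nonneg (hx j) (mul_nonneg heps.le (P_nonneg i j))
      exact le_of_tendsto_of_tendsto' ((hg _ h2).sub (hg _ h1)) ((hg _ h3).sub (hg x hx))
        (fun k => (hF k).2.2.2 x i lam eps hx hlam heps)
  have hgfeas : SFeasible n g S := by
    intro x hxS hxpos i dm dp hdm hdp
    have hx : 0 ≤ x := (hSbox x hxS).1
    have hkey : ∀ ε ε' : ℝ, 0 < ε → ε < x i → 0 < ε' →
        1 + (g (x + ε' • (Pi.single i 1 : Fin n → ℝ)) - g x) / ε' ≤ (g x - g (x - ε • (Pi.single i 1 : Fin n → ℝ))) / ε := by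
      intro ε ε' hε hεx hε'
      have hxm : (0:Fin n → ℝ) ≤ x - ε • (Pi.single i 1 : Fin n → ℝ) := by
        intro j
        simp only [Pi.zero_apply, Pi.sub_apply, Pi.smul_apply, smul_eq_mul, Pi.single_apply]
        rcases eq_or_ne j i with h | h
        · rw [if_pos h]
          rw [mul_one]
          have : x j = x i := by rw [h]
          linarith
        · rw [if_neg h, mul_zero, sub_zero]
          exact hx j
      have hxp : (0:Fin n → ℝ) ≤ x + ε' • (Pi.single i 1 : Fin n → ℝ) :=
        fun j => add_nonneg (hx j) (mul_nonneg hε'.le (P_nonneg i j))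
      have hk : ∀ k, 1 + (F k (x + ε' • (Pi.single i 1 : Fin n → ℝ)) - F k x) / ε'
          ≤ (F k x - F k (x - ε • (Pi.single i 1 : Fin n → ℝ))) / ε := by
        intro k
        obtain ⟨dmk, dpk, h1, h2, h3, h4⟩ := el_deriv (F k) (hF k) x hx i (hxpos i)
        have hfe := hFfeas k x hxS hxpos i dmk dpk h1 h2
        have h5 := h3 ε hε hεx
        have h6 := h4 ε' hε'
        linarith
      have t1 : Tendsto (fun k => 1 + (F k (x + ε' • (Pi.single i 1 : Fin n → ℝ)) - F k x) / ε')
          (U : Filter ℕ) (𝓝 (1 + (g (x + ε' • (Pi.single i 1 : Fin n → ℝ)) - g x) / ε')) :=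
        tendsto_const_nhds.add (((hg _ hxp).sub (hg x hx)).div_const ε')
      have t2 : Tendsto (fun k => (F k x - F k (x - ε • (Pi.single i 1 : Fin n → ℝ))) / ε)
          (U : Filter ℕ) (𝓝 ((g x - g (x - ε • (Pi.single i 1 : Fin n → ℝ))) / ε)) :=
        ((hg x hx).sub (hg _ hxm)).div_const ε
      exact le_of_tendsto_of_tendsto' t1 t2 hk
    have hstep : ∀ ε' : ℝ, 0 < ε' →
        1 + (g (x + ε' • (Pi.single i 1 : Fin n → ℝ)) - g x) / ε' ≤ dm := by
      intro ε' hε'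
      refine ge_of_tendsto hdm ?_
      filter_upwards [Ioo_mem_nhdsGT_of_mem (⟨le_rfl, hxpos i⟩ : (0:ℝ) ∈ Ico 0 (x i))] with ε hε
      exact hkey ε ε' hε.1 hε.2 hε'
    have hfinal : dp ≤ dm - 1 := by
      refine le_of_tendsto hdp ?_
      filter_upwards [self_mem_nhdsWithin] with ε' hε'
      have h := hstep ε' hε'
      linarith
    linarith
  have hge : ∀ i : Fin n, ∃ ei, HasRightPD n g i 0 ei ∧ ei ≤ δ i := by
    intro i
    have hmonoψ := bridge_mono g hgEL 0 le_rfl i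
    have hDRψ := bridge_DR g hgEL 0 le_rfl i
    have he0 : (0 : Fin n → ℝ) + (0:ℝ) • (Pi.single i 1 : Fin n → ℝ) = 0 := by simp
    have heε : ∀ ε : ℝ, (0 : Fin n → ℝ) + ((0:ℝ) + ε) • (Pi.single i 1 : Fin n → ℝ) = ε • (Pi.single i 1 : Fin n → ℝ) := by
      intro ε; simp
    have hgslope : ∀ ε : ℝ, 0 < ε → g (ε • (Pi.single i 1 : Fin n → ℝ)) ≤ δ i * ε := by
      intro ε hε
      have hnn : (0:Fin n → ℝ) ≤ ε • (Pi.single i 1 : Fin n → ℝ) :=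
        fun j => mul_nonneg hε.le (P_nonneg i j)
      exact le_of_tendsto_of_tendsto' (hg _ hnn) ((hδ i).mul_const ε)
        (fun k => el_slope0_le (F k) (hF k) i (d k i) (hd k i) ε hε.le)
    have hB : ∀ ε : ℝ, 0 < ε →
        (g ((0:Fin n → ℝ) + ((0:ℝ) + ε) • (Pi.single i 1 : Fin n → ℝ))
          - g ((0:Fin n → ℝ) + (0:ℝ) • (Pi.single i 1 : Fin n → ℝ))) / ε ≤ δ i := by
      intro ε hε
      rw [he0, heε, hg0, sub_zero, div_le_iff₀ hε]
      exact hgslope ε hε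
    obtain ⟨ei, hta, -, hei⟩ := rightD (fun τ => g ((0:Fin n → ℝ) + τ • (Pi.single i 1 : Fin n → ℝ)))
      hmonoψ hDRψ le_rfl hB
    refine ⟨ei, ?_, hei⟩
    show Tendsto (fun ε : ℝ => (g (0 + ε • (Pi.single i 1 : Fin n → ℝ)) - g 0) / ε) (𝓝[>] 0) (𝓝 ei)
    have hfe : (fun ε : ℝ => (g ((0:Fin n → ℝ) + ε • (Pi.single i 1 : Fin n → ℝ)) - g 0) / ε)
        = fun ε : ℝ => (g ((0:Fin n → ℝ) + ((0:ℝ) + ε) • (Pi.single i 1 : Fin n → ℝ))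
            - g ((0:Fin n → ℝ) + (0:ℝ) • (Pi.single i 1 : Fin n → ℝ))) / ε := by
      funext ε
      rw [he0, heε]
      congr 2
      simp
    rw [hfe]
    exact hta
  choose e he using hge
  refine ⟨g, e, hgEL, hgfeas, fun i => (he i).1, ?_⟩
  apply Finset.sup'_le
  intro i _
  exact le_trans (he i).2 (hδc i)
end
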